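/- arXiv:1704.07112 — 4 statements merged into one kernel-verified Lean document; each statement's English description precedes it below -/
import Mathlib

section
/- Let D = (d_1,...,d_n) and F = (f_1,...,f_n) be tree degree sequences with n ≥ 3 such that min(d_i, f_i) = 1 for all i. If T_1 and T_2 are independent uniformly random labeled trees realizing D and F respectively, then the expected number of edges common to T_1 and T_2 equals 1. -/
/-- `G` realizes the degree sequence `d`: vertex `v` has degree `d v`. -/
def realizes {n : ℕ} (G : SimpleGraph (Fin n)) (d : Fin n → ℕ) : Prop :=
  ∀ v, {u | G.Adj v u}.ncard = d v

/-- A tree degree sequence: positive entries summing to `2n - 2`. -/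
def isTreeSeq {n : ℕ} (d : Fin n → ℕ) : Prop :=
  (∀ i, 1 ≤ d i) ∧ (∑ i, d i) = 2 * n - 2

/-- A caterpillar: a tree whose non-leaf vertices span a path. -/
def isCaterpillar {n : ℕ} (T : SimpleGraph (Fin n)) : Prop :=
  T.IsTree ∧ ∃ p : List (Fin n), p.Nodup ∧ p.Chain' T.Adj ∧
    ∀ v, (1 < {u | T.Adj v u}.ncard ↔ v ∈ p)

open SimpleGraph

open scoped Classical

set_option linter.unusedVariables false

set_option linter.unusedSectionVars false
set_option maxHeartbeats 1000000

section Dev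

variable {V : Type} [Fintype V] [DecidableEq V]

def good (d : V → ℕ) (T : SimpleGraph V) : Prop :=
  T.IsTree ∧ ∀ v, {u | T.Adj v u}.ncard = d v

noncomputable def tcount (V : Type) [Fintype V] [DecidableEq V] (d : V → ℕ) : ℕ :=
  Nat.card {T : SimpleGraph V // good d T}

lemma nbr_unique {T : SimpleGraph V} {v : V} (h1 : {u | T.Adj v u}.ncard = 1)
    {y z : V} (hy : T.Adj v y) (hz : T.Adj v z) : y = z := by
  obtain ⟨a, ha⟩ := Set.ncard_eq_one.mp h1
  have hy' : y ∈ {u | T.Adj v u} := hy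
  have hz' : z ∈ {u | T.Adj v u} := hz
  rw [ha] at hy' hz'
  simp at hy' hz'
  rw [hy', hz']

lemma exists_walk_avoiding {T : SimpleGraph V} {v : V}
    (hnb : ∀ y z, T.Adj v y → T.Adj v z → y = z) :
    ∀ (k : ℕ) {a b : V} (p : T.Walk a b), p.length ≤ k → a ≠ v → b ≠ v →
      ∃ q : T.Walk a b, ∀ w ∈ q.support, w ≠ v := by
  intro k
  induction k with
  | zero =>
    intro a b p hlen ha hb
    cases p with
    | nil => exact ⟨.nil, by simp [ha]⟩
    | cons h p' => simp [SimpleGraph.Walk.length_cons] at hlen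
  | succ k ih =>
    intro a b p hlen ha hb
    cases p with
    | nil => exact ⟨.nil, by simp [ha]⟩
    | @cons _ c _ h p' =>
      by_cases hc : c = v
      · subst hc
        cases p' with
        | nil => exact absurd rfl hb
        | @cons _ c2 _ h2 p'' =>
          have hac2 : c2 = a := hnb c2 a h2 h.symm
          subst hac2
          apply ih p'' _ ha hb
          simp [SimpleGraph.Walk.length_cons] at hlen
          omega
      · obtain ⟨q, hq⟩ := ih p' (by simp [SimpleGraph.Walk.length_cons] at hlen; omega) hc hb
        exact ⟨.cons h q, by
          intro w hw
          rw [SimpleGraph.Walk.support_cons] at hw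
          rcases List.mem_cons.mp hw with rfl | hw
          · exact ha
          · exact hq w hw⟩

lemma exists_walk_down {v : V} {T' : SimpleGraph {w : V // w ≠ v}} {H : SimpleGraph V}
    (hiff : ∀ (x y : V) (hx : x ≠ v) (hy : y ≠ v), H.Adj x y ↔ T'.Adj ⟨x, hx⟩ ⟨y, hy⟩)
    {a b : V} (p : H.Walk a b) (hp : ∀ w ∈ p.support, w ≠ v) (ha : a ≠ v) (hb : b ≠ v) :
    ∃ q : T'.Walk ⟨a, ha⟩ ⟨b, hb⟩,
      q.map (⟨Subtype.val, fun {x y} h => (hiff x.1 y.1 x.2 y.2).mpr h⟩ : T' →g H) = p := by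
  induction p with
  | nil => exact ⟨.nil, rfl⟩
  | @cons x c y h p' ih =>
    have hc : c ≠ v := hp c (by simp [SimpleGraph.Walk.support_cons])
    have hx : x ≠ v := hp x (by simp [SimpleGraph.Walk.support_cons])
    obtain ⟨q, hq⟩ := ih (fun w hw => hp w (by simp [SimpleGraph.Walk.support_cons]; tauto)) hc hb
    exact ⟨.cons ((hiff x c hx hc).mp h) q, by simp [SimpleGraph.Walk.map_cons, hq]⟩

def extend (v : V) (u : {w : V // w ≠ v}) (T' : SimpleGraph {w : V // w ≠ v}) :
    SimpleGraph V where
  Adj x y := (∃ (hx : x ≠ v) (hy : y ≠ v), T'.Adj ⟨x, hx⟩ ⟨y, hy⟩) ∨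
    (x = u.1 ∧ y = v) ∨ (x = v ∧ y = u.1)
  symm := ⟨by
    rintro x y (⟨hx, hy, h⟩ | ⟨rfl, rfl⟩ | ⟨rfl, rfl⟩)
    · exact Or.inl ⟨hy, hx, h.symm⟩
    · exact Or.inr (Or.inr ⟨rfl, rfl⟩)
    · exact Or.inr (Or.inl ⟨rfl, rfl⟩)⟩
  loopless := ⟨by
    rintro x (⟨hx, hy, h⟩ | ⟨h1, h2⟩ | ⟨h1, h2⟩)
    · exact h.ne rfl
    · exact u.2 (by rw [← h1, h2])
    · exact u.2 (by rw [← h2, h1])⟩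

lemma extend_adj_v {v : V} {u : {w : V // w ≠ v}} {T' : SimpleGraph {w : V // w ≠ v}} {y : V} :
    (extend v u T').Adj v y ↔ y = u.1 := by
  constructor
  · rintro (⟨hx, _, _⟩ | ⟨h, _⟩ | ⟨_, rfl⟩)
    · exact absurd rfl hx
    · exact absurd h.symm u.2
    · rfl
  · rintro rfl; exact Or.inr (Or.inr ⟨rfl, rfl⟩)

lemma extend_adj_nonv {v : V} {u : {w : V // w ≠ v}} {T' : SimpleGraph {w : V // w ≠ v}}
    {x y : V} (hx : x ≠ v) (hy : y ≠ v) :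
    (extend v u T').Adj x y ↔ T'.Adj ⟨x, hx⟩ ⟨y, hy⟩ := by
  constructor
  · rintro (⟨hx', hy', h⟩ | ⟨_, rfl⟩ | ⟨rfl, _⟩)
    · exact h
    · exact absurd rfl hy
    · exact absurd rfl hx
  · intro h; exact Or.inl ⟨hx, hy, h⟩

/-- restricting a tree with a pendant vertex `v` attached to `u` -/
lemma good_restrict {v u : V} (hu : u ≠ v) {d : V → ℕ} (hdv : d v = 1)
    {T : SimpleGraph V} (hT : good d T) (hadj : T.Adj v u) :
    good (fun w : {w : V // w ≠ v} => if w.1 = u then d u - 1 else d w.1)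
      (T.comap (Subtype.val : {w : V // w ≠ v} → V)) := by
  obtain ⟨htree, hdeg⟩ := hT
  have hnb : ∀ y z, T.Adj v y → T.Adj v z → y = z :=
    fun y z hy hz => nbr_unique (by rw [hdeg v, hdv]) hy hz
  have hset : ∀ a : {w : V // w ≠ v},
      (Subtype.val '' {b | (T.comap Subtype.val).Adj a b}) = {x | T.Adj a.1 x} \ {v} := by
    intro a
    ext x
    simp only [Set.mem_image, Set.mem_setOf_eq, comap_adj, Set.mem_diff, Set.mem_singleton_iff]
    constructor
    · rintro ⟨b, hb, rfl⟩; exact ⟨hb, b.2⟩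
    · rintro ⟨hadj', hx⟩; exact ⟨⟨x, hx⟩, hadj', rfl⟩
  constructor
  · have hne : Nonempty {w : V // w ≠ v} := ⟨⟨u, hu⟩⟩
    constructor
    · constructor
      intro a b
      obtain ⟨p⟩ := htree.isConnected.preconnected a.1 b.1
      obtain ⟨q, hq⟩ := exists_walk_avoiding hnb p.length p le_rfl a.2 b.2
      obtain ⟨q', _⟩ := exists_walk_down (T' := T.comap Subtype.val)
        (fun x y hx hy => Iff.rfl) q hq a.2 b.2
      exact ⟨q'⟩
    · intro x c hc
      have hcm : (c.map (⟨Subtype.val, fun {a b} h => h⟩ :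
          T.comap Subtype.val →g T)).IsCycle :=
        (SimpleGraph.Walk.map_isCycle_iff_of_injective Subtype.val_injective).mpr hc
      exact htree.IsAcyclic _ hcm
  · intro a
    have himg := Set.ncard_image_of_injective {b | (T.comap Subtype.val).Adj a b}
      (Subtype.val_injective)
    rw [← himg, hset a]
    by_cases hau : a.1 = u
    · rw [hau]
      have hv : v ∈ {x | T.Adj u x} := hadj.symm
      rw [Set.ncard_diff_singleton_of_mem hv, hdeg u]
      simp [hau]
    · have hvn : v ∉ {x | T.Adj a.1 x} := by
        intro hmem
        exact hau (hnb a.1 u hmem.symm hadj)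
      rw [Set.diff_singleton_eq_self hvn, hdeg a.1]
      simp [hau]

/-- attaching a pendant vertex `v` to `u` yields a tree with the right degrees -/
lemma good_extend {v u : V} (hu : u ≠ v) {d : V → ℕ} (hdv : d v = 1) (hdu : 1 ≤ d u)
    {T' : SimpleGraph {w : V // w ≠ v}}
    (hT' : good (fun w : {w : V // w ≠ v} => if w.1 = u then d u - 1 else d w.1) T') :
    good d (extend v ⟨u, hu⟩ T') := by
  obtain ⟨htree, hdeg⟩ := hT'
  set H := extend v ⟨u, hu⟩ T' with hH
  constructor
  · constructor
    · have hreach : ∀ x : V, H.Reachable x v := by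
        intro x
        by_cases hx : x = v
        · rw [hx]
        · have h1 : T'.Reachable ⟨x, hx⟩ ⟨u, hu⟩ := htree.isConnected.preconnected _ _
          have h2 : H.Reachable x u :=
            h1.map (⟨Subtype.val, fun {a b} h => Or.inl ⟨a.2, b.2, h⟩⟩ : T' →g H)
          exact h2.trans (SimpleGraph.Adj.reachable (Or.inr (Or.inl ⟨rfl, rfl⟩)))
      have hne : Nonempty V := ⟨v⟩
      constructor
      intro x y
      exact (hreach x).trans (hreach y).symm
    · intro x c hc
      by_cases hv : v ∈ c.support
      · have hc' := hc.rotate hv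
        obtain ⟨y, h, q, he⟩ := SimpleGraph.Walk.not_nil_iff.mp hc'.not_nil
        rw [he] at hc'
        have hyu : y = u := extend_adj_v.mp h
        have hyv : y ≠ v := by rw [hyu]; exact hu
        have hqrevn : ¬ q.reverse.Nil := SimpleGraph.Walk.not_nil_of_ne (Ne.symm hyv)
        obtain ⟨z, h2, q2, he2⟩ := SimpleGraph.Walk.not_nil_iff.mp hqrevn
        have hzu : z = u := extend_adj_v.mp h2
        have hmem : s(v, z) ∈ q.reverse.edges := by
          rw [he2]; simp [SimpleGraph.Walk.edges_cons]
        rw [SimpleGraph.Walk.edges_reverse, List.mem_reverse] at hmem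
        have hnodup := hc'.isCircuit.isTrail.edges_nodup
        rw [SimpleGraph.Walk.edges_cons] at hnodup
        have hnot : s(v, y) ∉ q.edges := (List.nodup_cons.mp hnodup).1
        have hzy : s(v, z) = s(v, y) := by rw [hzu, hyu]
        exact hnot (hzy ▸ hmem)
      · have hall : ∀ w ∈ c.support, w ≠ v := fun w hw => fun hwv => hv (hwv ▸ hw)
        have hx : x ≠ v := hall x c.start_mem_support
        obtain ⟨q, hq⟩ := exists_walk_down
          (fun a b ha hb => extend_adj_nonv ha hb) c hall hx hx
        rw [← hq] at hc
        have := (SimpleGraph.Walk.map_isCycle_iff_of_injective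
          Subtype.val_injective).mp hc
        exact htree.IsAcyclic _ this
  · intro w
    by_cases hwv : w = v
    · subst hwv
      have : {y | H.Adj w y} = {u} := by
        ext y; simp only [Set.mem_setOf_eq, Set.mem_singleton_iff]; exact extend_adj_v
      rw [this, Set.ncard_singleton, hdv]
    · by_cases hwu : w = u
      · subst hwu
        have : {y | H.Adj w y} =
            (Subtype.val '' {b | T'.Adj ⟨w, hwv⟩ b}) ∪ {v} := by
          ext y
          simp only [Set.mem_setOf_eq, Set.mem_union, Set.mem_image, Set.mem_singleton_iff]
          constructor
          · rintro (⟨hx', hy', h⟩ | ⟨_, rfl⟩ | ⟨h1, _⟩)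
            · exact Or.inl ⟨⟨y, hy'⟩, h, rfl⟩
            · exact Or.inr rfl
            · exact absurd h1 hwv
          · rintro (⟨b, hb, rfl⟩ | rfl)
            · exact Or.inl ⟨hwv, b.2, hb⟩
            · exact Or.inr (Or.inl ⟨rfl, rfl⟩)
        rw [this, Set.ncard_union_eq ?disj (Set.toFinite _) (Set.toFinite _),
          Set.ncard_image_of_injective _ Subtype.val_injective, hdeg ⟨w, hwv⟩,
          Set.ncard_singleton]
        · beta_reduce
          split
          · omega
          · next hne => exact absurd rfl hne
        case disj =>
          rw [Set.disjoint_singleton_right]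
          rintro ⟨b, _, hbv⟩
          exact b.2 hbv
      · have : {y | H.Adj w y} = Subtype.val '' {b | T'.Adj ⟨w, hwv⟩ b} := by
          ext y
          simp only [Set.mem_setOf_eq, Set.mem_image]
          constructor
          · rintro (⟨hx', hy', h⟩ | ⟨h1, _⟩ | ⟨h1, _⟩)
            · exact ⟨⟨y, hy'⟩, h, rfl⟩
            · exact absurd h1 hwu
            · exact absurd h1 hwv
          · rintro ⟨b, hb, rfl⟩
            exact Or.inl ⟨hwv, b.2, hb⟩
        rw [this, Set.ncard_image_of_injective _ Subtype.val_injective, hdeg ⟨w, hwv⟩]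
        simp [hwu]

lemma card_pendant (v u : V) (hu : u ≠ v) (d : V → ℕ) (hdv : d v = 1) (hdu : 2 ≤ d u) :
    Nat.card {T : SimpleGraph V // good d T ∧ T.Adj v u} =
    tcount {w : V // w ≠ v} (fun w => if w.1 = u then d u - 1 else d w.1) := by
  apply Nat.card_congr
  refine ⟨fun T => ⟨T.1.comap Subtype.val, good_restrict hu hdv T.2.1 T.2.2⟩,
    fun T' => ⟨extend v ⟨u, hu⟩ T'.1, good_extend hu hdv (by omega) T'.2,
      Or.inr (Or.inr ⟨rfl, rfl⟩)⟩, ?_, ?_⟩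
  · rintro ⟨T, hT, hadj⟩
    apply Subtype.ext
    have hnb : ∀ y z, T.Adj v y → T.Adj v z → y = z :=
      fun y z hy hz => nbr_unique (by rw [hT.2 v, hdv]) hy hz
    show extend v ⟨u, hu⟩ (T.comap Subtype.val) = T
    ext x y
    constructor
    · rintro (⟨hx, hy, h⟩ | ⟨rfl, rfl⟩ | ⟨rfl, rfl⟩)
      · exact h
      · exact hadj.symm
      · exact hadj
    · intro h
      by_cases hx : x = v
      · subst hx
        exact Or.inr (Or.inr ⟨rfl, hnb y u h hadj⟩)
      · by_cases hy : y = v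
        · subst hy
          exact Or.inr (Or.inl ⟨hnb x u h.symm hadj, rfl⟩)
        · exact Or.inl ⟨hx, hy, h⟩
  · rintro ⟨T', hT'⟩
    apply Subtype.ext
    show (extend v ⟨u, hu⟩ T').comap Subtype.val = T'
    ext a b
    exact extend_adj_nonv a.2 b.2

lemma card_two_leaves (hcard : 3 ≤ Fintype.card V) (v u : V) (hu : u ≠ v) (d : V → ℕ)
    (hdv : d v = 1) (hdu : d u = 1) :
    Nat.card {T : SimpleGraph V // good d T ∧ T.Adj v u} = 0 := by
  rw [Nat.card_eq_zero]
  left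
  constructor
  rintro ⟨T, hT, hadj⟩
  have hres := good_restrict hu hdv hT hadj
  have h0 : {b | (T.comap (Subtype.val : {w : V // w ≠ v} → V)).Adj ⟨u, hu⟩ b}.ncard = 0 := by
    rw [hres.2 ⟨u, hu⟩]
    simp [hdu]
  obtain ⟨b, hb⟩ : ∃ b : {w : V // w ≠ v}, b ≠ ⟨u, hu⟩ := by
    apply Fintype.exists_ne_of_one_lt_card
    have : Fintype.card {w : V // w ≠ v} = Fintype.card V - 1 := by
      rw [Fintype.card_subtype_compl, Fintype.card_subtype_eq]
    omega
  obtain ⟨p⟩ := hres.1.isConnected.preconnected ⟨u, hu⟩ b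
  obtain ⟨y, hadj', q, _⟩ := SimpleGraph.Walk.not_nil_iff.mp
    (show ¬ p.Nil from SimpleGraph.Walk.not_nil_of_ne (Ne.symm hb))
  have hmem : y ∈ {b | (T.comap (Subtype.val : {w : V // w ≠ v} → V)).Adj ⟨u, hu⟩ b} := hadj'
  rw [Set.ncard_eq_zero (Set.toFinite _)] at h0
  rw [h0] at hmem
  exact hmem

lemma tcount_partition (v : V) (d : V → ℕ) (hdv : d v = 1) :
    tcount V d = ∑ u ∈ Finset.univ.erase v,
      Nat.card {T : SimpleGraph V // good d T ∧ T.Adj v u} := by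
  have hconv : ∀ (p : SimpleGraph V → Prop) (inst : DecidablePred p),
      Nat.card {T : SimpleGraph V // p T} = (@Finset.filter _ p inst Finset.univ).card := by
    intro p inst
    rw [Nat.card_eq_fintype_card]
    exact Fintype.card_of_subtype _ (by simp)
  rw [tcount, hconv _ (Classical.decPred _)]
  have hsum : ∀ u ∈ Finset.univ.erase v,
      Nat.card {T : SimpleGraph V // good d T ∧ T.Adj v u} =
      (Finset.univ.filter (fun T : SimpleGraph V => good d T ∧ T.Adj v u)).card :=
    fun u _ => hconv _ _

  rw [Finset.sum_congr rfl hsum]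
  rw [← Finset.card_biUnion]
  · congr 1
    apply Finset.ext
    intro T
    simp only [Finset.mem_filter, Finset.mem_univ, true_and, Finset.mem_biUnion,
      Finset.mem_erase]
    constructor
    · intro hT
      have h1 : {u | T.Adj v u}.ncard = 1 := by rw [hT.2 v, hdv]
      obtain ⟨a, ha⟩ := Set.ncard_eq_one.mp h1
      have hadj : T.Adj v a := by
        have : a ∈ {u | T.Adj v u} := by rw [ha]; rfl
        exact this
      exact ⟨a, ⟨⟨hadj.ne', trivial⟩, hT, hadj⟩⟩
    · rintro ⟨a, _, hT, _⟩
      exact hT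
  · intro x hx y hy hxy
    rw [Function.onFun, Finset.disjoint_left]
    rintro T hT1 hT2
    rw [Finset.mem_filter] at hT1 hT2
    have h1 : {u | T.Adj v u}.ncard = 1 := by rw [hT1.2.1.2 v, hdv]
    exact hxy (nbr_unique h1 hT1.2.2 hT2.2.2)

lemma sum_ite_erase (s : Finset V) {u : V} (hu : u ∈ s) (d : V → ℕ) (c : ℕ) :
    (∑ x ∈ s, if x = u then c else d x) = c + ∑ x ∈ s.erase u, d x := by
  rw [← Finset.add_sum_erase s (fun x => if x = u then c else d x) hu, if_pos rfl]
  congr 1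
  exact Finset.sum_congr rfl fun x hx => if_neg (Finset.mem_erase.mp hx).1

lemma prod_ite_erase (s : Finset V) {u : V} (hu : u ∈ s) (d : V → ℕ) (c : ℕ) :
    (∏ x ∈ s, if x = u then c else d x) = c * ∏ x ∈ s.erase u, d x := by
  rw [← Finset.mul_prod_erase s (fun x => if x = u then c else d x) hu, if_pos rfl]
  congr 1
  exact Finset.prod_congr rfl fun x hx => if_neg (Finset.mem_erase.mp hx).1

lemma tcount_top_two (hcard : Fintype.card V = 2) (d : V → ℕ) (hall : ∀ i, d i = 1) :
    tcount V d = 1 := by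
  have htop : good d (⊤ : SimpleGraph V) := by
    constructor
    · constructor
      · have hne : Nonempty V := Fintype.card_pos_iff.mp (by omega)
        constructor
        intro x y
        by_cases hxy : x = y
        · rw [hxy]
        · exact SimpleGraph.Adj.reachable ((SimpleGraph.top_adj x y).mpr hxy)
      · intro x c hc
        have h3 := hc.three_le_length
        have hnodup := hc.support_nodup
        have hlen := SimpleGraph.Walk.length_support c
        have hle := hnodup.length_le_card
        rw [List.length_tail, hlen] at hle
        omega
    · intro x
      have : {u | (⊤ : SimpleGraph V).Adj x u} = Set.univ \ {x} := by
        ext y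
        simp [SimpleGraph.top_adj, eq_comm]
      rw [this, Set.ncard_diff_singleton_of_mem (Set.mem_univ x),
        Set.ncard_univ, Nat.card_eq_fintype_card, hcard, hall x]
  have huniq : ∀ T : SimpleGraph V, good d T → T = ⊤ := by
    intro T hT
    ext x y
    simp only [SimpleGraph.top_adj]
    constructor
    · exact fun h => h.ne
    · intro hxy
      have h1 : {u | T.Adj x u}.ncard = 1 := by rw [hT.2 x, hall x]
      obtain ⟨a, ha⟩ := Set.ncard_eq_one.mp h1
      have hadj : T.Adj x a := by
        have : a ∈ {u | T.Adj x u} := by rw [ha]; rfl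
        exact this
      have hay : a = y := by
        by_contra hay
        have hax : a ≠ x := hadj.ne'
        have : ({x, a, y} : Finset V).card = 3 := by
          rw [Finset.card_insert_of_notMem (by simp [hax.symm, hxy]),
            Finset.card_insert_of_notMem (by simp [hay]), Finset.card_singleton]
        have hle := Finset.card_le_univ ({x, a, y} : Finset V)
        rw [this] at hle
        omega
      exact hay ▸ hadj
  rw [tcount, Nat.card_eq_one_iff_unique]
  constructor
  · constructor
    rintro ⟨T1, h1⟩ ⟨T2, h2⟩
    exact Subtype.ext ((huniq T1 h1).trans (huniq T2 h2).symm)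
  · exact ⟨⟨⊤, htop⟩⟩

lemma tcount_formula : ∀ (n : ℕ) (V : Type) [Fintype V] [DecidableEq V] (d : V → ℕ),
    Fintype.card V = n → 2 ≤ n → (∀ i, 1 ≤ d i) → (∑ i, d i) = 2 * n - 2 →
    tcount V d * ∏ i, (d i - 1).factorial = (n - 2).factorial := by
  intro n
  induction n using Nat.strong_induction_on with
  | _ n ih =>
    intro V _ _ d hcard hn2 hpos hsum
    by_cases h3 : 3 ≤ n
    · -- inductive step: find a leaf
      have hleaf : ∃ v, d v = 1 := by
        by_contra hno
        push_neg at hno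
        have h2 : ∀ i ∈ Finset.univ, 2 ≤ d i := by
          intro i _
          have := hpos i
          have := hno i
          omega
        have := Finset.sum_le_sum h2
        rw [Finset.sum_const, Finset.card_univ, hcard, smul_eq_mul] at this
        omega
      obtain ⟨v, hv⟩ := hleaf
      rw [tcount_partition v d hv, Finset.sum_mul]
      have key : ∀ u ∈ Finset.univ.erase v,
          Nat.card {T : SimpleGraph V // good d T ∧ T.Adj v u} * ∏ i, (d i - 1).factorial =
          (d u - 1) * (n - 3).factorial := by
        intro u hu
        have hune : u ≠ v := (Finset.mem_erase.mp hu).1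
        have hcardsub : Fintype.card {w : V // w ≠ v} = n - 1 := by
          rw [Fintype.card_subtype_compl, Fintype.card_subtype_eq, hcard]
        by_cases hdu : 2 ≤ d u
        · rw [card_pendant v u hune d hv hdu]
          set d' := fun w : {w : V // w ≠ v} => if w.1 = u then d u - 1 else d w.1 with hd'
          -- sum of d'
          have hmemiff : ∀ x : V, x ∈ Finset.univ.erase v ↔ x ≠ v := by
            intro x; simp [Finset.mem_erase]
          have hsum_erase : ∑ x ∈ Finset.univ.erase v, d x = 2 * n - 3 := by
            have := Finset.add_sum_erase Finset.univ d (Finset.mem_univ v)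
            omega
          have humem : u ∈ Finset.univ.erase v := hu
          have hsum' : (∑ i : {w : V // w ≠ v}, d' i) = 2 * (n - 1) - 2 := by
            rw [hd']
            rw [← Finset.sum_subtype (Finset.univ.erase v) hmemiff
              (fun x => if x = u then d u - 1 else d x)]
            rw [sum_ite_erase (Finset.univ.erase v) humem d (d u - 1)]
            have e2 := Finset.add_sum_erase (Finset.univ.erase v) d humem
            omega
          have hpos' : ∀ i : {w : V // w ≠ v}, 1 ≤ d' i := by
            intro i
            rw [hd']
            by_cases hiu : i.1 = u
            · simp only [if_pos hiu]; omega
            · simp only [if_neg hiu]; exact hpos i.1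
          have IH := ih (n - 1) (by omega) {w : V // w ≠ v} d' hcardsub (by omega) hpos' hsum'
          -- product bookkeeping
          have hbody : ∀ x : V, ((if x = u then d u - 1 else d x) - 1).factorial =
              (if x = u then (d u - 2).factorial else (d x - 1).factorial) := by
            intro x
            by_cases hxe : x = u
            · rw [if_pos hxe, if_pos hxe]
              congr 1
            · rw [if_neg hxe, if_neg hxe]
          have hprod : (∏ i, (d i - 1).factorial) =
              (d u - 1) * ∏ i : {w : V // w ≠ v}, (d' i - 1).factorial := by
            conv_rhs => rw [hd']
            rw [← Finset.prod_subtype (Finset.univ.erase v) hmemiff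
              (fun x => ((if x = u then d u - 1 else d x) - 1).factorial)]
            rw [Finset.prod_congr rfl (fun x _ => hbody x)]
            rw [prod_ite_erase (Finset.univ.erase v) humem
              (fun x => (d x - 1).factorial) ((d u - 2).factorial)]
            rw [← Finset.mul_prod_erase Finset.univ (fun i => (d i - 1).factorial)
              (Finset.mem_univ v), hv]
            rw [← Finset.mul_prod_erase (Finset.univ.erase v) (fun i => (d i - 1).factorial)
              humem]
            simp only [Nat.sub_self, Nat.factorial_zero, one_mul]
            rw [show d u - 1 = (d u - 2) + 1 from by omega, Nat.factorial_succ]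
            ring
          rw [hprod, ← mul_assoc, mul_comm _ (d u - 1), mul_assoc, IH,
            show n - 1 - 2 = n - 3 from by omega]
        · have hdu1 : d u = 1 := by have := hpos u; omega
          rw [card_two_leaves (by omega) v u hune d hv hdu1, hdu1]
          simp
      rw [Finset.sum_congr rfl key, ← Finset.sum_mul]
      have hsum_minus : ∑ u ∈ Finset.univ.erase v, (d u - 1) = n - 2 := by
        have e2 := Finset.add_sum_erase Finset.univ d (Finset.mem_univ v)
        have e4 : ∑ u ∈ Finset.univ.erase v, ((d u - 1) + 1) = ∑ u ∈ Finset.univ.erase v, d u :=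
          Finset.sum_congr rfl (fun x _ => by have := hpos x; omega)
        rw [Finset.sum_add_distrib, Finset.sum_const, smul_eq_mul, mul_one] at e4
        have e5 : (Finset.univ.erase v).card = n - 1 := by
          rw [Finset.card_erase_of_mem (Finset.mem_univ v), Finset.card_univ, hcard]
        omega
      rw [hsum_minus, show n - 2 = (n - 3) + 1 from by omega, Nat.factorial_succ]
    · -- base case: n = 2
      have hn : n = 2 := by omega
      subst hn
      have hall : ∀ i, d i = 1 := by
        intro i
        by_contra hne
        have hi2 : 2 ≤ d i := by have := hpos i; omega
        obtain ⟨j, hj⟩ := Fintype.exists_ne_of_one_lt_card (by omega) i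
        have e2 := Finset.add_sum_erase Finset.univ d (Finset.mem_univ i)
        have hjs : d j ≤ ∑ x ∈ Finset.univ.erase i, d x :=
          Finset.single_le_sum (fun x _ => Nat.zero_le _)
            (Finset.mem_erase.mpr ⟨hj, Finset.mem_univ j⟩)
        have := hpos j
        omega
      rw [tcount_top_two hcard d hall]
      simp [hall]

lemma ecount_formula (hcard3 : 3 ≤ Fintype.card V) (d : V → ℕ) (hpos : ∀ i, 1 ≤ d i)
    (hsum : ∑ i, d i = 2 * Fintype.card V - 2) {v u : V} (hv : d v = 1) (hu : u ≠ v) :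
    Nat.card {T : SimpleGraph V // good d T ∧ T.Adj v u} * ∏ i, (d i - 1).factorial =
    (Fintype.card V - 3).factorial * (d u - 1) := by
  set n := Fintype.card V with hn
  by_cases hdu : 2 ≤ d u
  · rw [card_pendant v u hu d hv hdu]
    set d' := fun w : {w : V // w ≠ v} => if w.1 = u then d u - 1 else d w.1 with hd'
    have hmemiff : ∀ x : V, x ∈ Finset.univ.erase v ↔ x ≠ v := by
      intro x; simp [Finset.mem_erase]
    have humem : u ∈ Finset.univ.erase v := Finset.mem_erase.mpr ⟨hu, Finset.mem_univ u⟩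
    have hcardsub : Fintype.card {w : V // w ≠ v} = n - 1 := by
      rw [Fintype.card_subtype_compl, Fintype.card_subtype_eq, hn]
    have hsum_erase : ∑ x ∈ Finset.univ.erase v, d x = 2 * n - 3 := by
      have := Finset.add_sum_erase Finset.univ d (Finset.mem_univ v)
      omega
    have hsum' : (∑ i : {w : V // w ≠ v}, d' i) = 2 * (n - 1) - 2 := by
      rw [hd']
      rw [← Finset.sum_subtype (Finset.univ.erase v) hmemiff
        (fun x => if x = u then d u - 1 else d x)]
      rw [sum_ite_erase (Finset.univ.erase v) humem d (d u - 1)]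
      have e2 := Finset.add_sum_erase (Finset.univ.erase v) d humem
      omega
    have hpos' : ∀ i : {w : V // w ≠ v}, 1 ≤ d' i := by
      intro i
      rw [hd']
      by_cases hiu : i.1 = u
      · simp only [if_pos hiu]; omega
      · simp only [if_neg hiu]; exact hpos i.1
    have IH := tcount_formula (n - 1) {w : V // w ≠ v} d' hcardsub (by omega) hpos' hsum'
    have hbody : ∀ x : V, ((if x = u then d u - 1 else d x) - 1).factorial =
        (if x = u then (d u - 2).factorial else (d x - 1).factorial) := by
      intro x
      by_cases hxe : x = u
      · rw [if_pos hxe, if_pos hxe]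
        congr 1
      · rw [if_neg hxe, if_neg hxe]
    have hprod : (∏ i, (d i - 1).factorial) =
        (d u - 1) * ∏ i : {w : V // w ≠ v}, (d' i - 1).factorial := by
      conv_rhs => rw [hd']
      rw [← Finset.prod_subtype (Finset.univ.erase v) hmemiff
        (fun x => ((if x = u then d u - 1 else d x) - 1).factorial)]
      rw [Finset.prod_congr rfl (fun x _ => hbody x)]
      rw [prod_ite_erase (Finset.univ.erase v) humem
        (fun x => (d x - 1).factorial) ((d u - 2).factorial)]
      rw [← Finset.mul_prod_erase Finset.univ (fun i => (d i - 1).factorial)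
        (Finset.mem_univ v), hv]
      rw [← Finset.mul_prod_erase (Finset.univ.erase v) (fun i => (d i - 1).factorial)
        humem]
      simp only [Nat.sub_self, Nat.factorial_zero, one_mul]
      rw [show d u - 1 = (d u - 2) + 1 from by omega, Nat.factorial_succ]
      ring
    rw [hprod, ← mul_assoc, mul_comm _ (d u - 1), mul_assoc, IH,
      show n - 1 - 2 = n - 3 from by omega]
    ring
  · have hdu1 : d u = 1 := by have := hpos u; omega
    rw [card_two_leaves (by omega) v u hu d hv hdu1, hdu1]
    simp

lemma tcount_pos (hcard : 2 ≤ Fintype.card V) (d : V → ℕ) (hpos : ∀ i, 1 ≤ d i)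
    (hsum : ∑ i, d i = 2 * Fintype.card V - 2) : 0 < tcount V d := by
  have h := tcount_formula (Fintype.card V) V d rfl hcard hpos hsum
  rcases Nat.eq_zero_or_pos (tcount V d) with h0 | h1
  · rw [h0, zero_mul] at h
    exact absurd h.symm (Nat.factorial_pos _).ne'
  · exact h1

lemma tcount_mul_prod (hcard : 2 ≤ Fintype.card V) (d : V → ℕ) (hpos : ∀ i, 1 ≤ d i)
    (hsum : ∑ i, d i = 2 * Fintype.card V - 2) :
    tcount V d * ∏ i, (d i - 1).factorial = (Fintype.card V - 2).factorial :=
  tcount_formula (Fintype.card V) V d rfl hcard hpos hsum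

/-- swap the edge orientation in the counted subtype -/
lemma ecount_symm (d : V → ℕ) (x y : V) :
    Nat.card {T : SimpleGraph V // good d T ∧ T.Adj x y} =
    Nat.card {T : SimpleGraph V // good d T ∧ T.Adj y x} :=
  Nat.card_congr ⟨fun T => ⟨T.1, T.2.1, T.2.2.symm⟩, fun T => ⟨T.1, T.2.1, T.2.2.symm⟩,
    fun T => rfl, fun T => rfl⟩

lemma ecount_irrefl (d : V → ℕ) (x : V) :
    Nat.card {T : SimpleGraph V // good d T ∧ T.Adj x x} = 0 := by
  rw [Nat.card_eq_zero]
  left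
  exact ⟨fun T => T.2.2.ne rfl⟩

lemma master (hcard3 : 3 ≤ Fintype.card V) (D F : V → ℕ)
    (hD1 : ∀ i, 1 ≤ D i) (hDs : ∑ i, D i = 2 * Fintype.card V - 2)
    (hF1 : ∀ i, 1 ≤ F i) (hFs : ∑ i, F i = 2 * Fintype.card V - 2)
    (hmin : ∀ i, min (D i) (F i) = 1) (x y : V) :
    (Nat.card {T : SimpleGraph V // good D T ∧ T.Adj x y}) *
      (Nat.card {T : SimpleGraph V // good F T ∧ T.Adj x y}) *
      ((∏ i, (D i - 1).factorial) * (∏ i, (F i - 1).factorial)) =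
    (Fintype.card V - 3).factorial * (Fintype.card V - 3).factorial *
      ((D x - 1) * (F y - 1) + (D y - 1) * (F x - 1)) := by
  have hDF : ∀ i, D i = 1 ∨ F i = 1 := by
    intro i
    have := hmin i
    omega
  by_cases hxy : x = y
  · subst hxy
    rw [ecount_irrefl]
    have : (D x - 1) * (F x - 1) = 0 := by
      rcases hDF x with h | h <;> simp [h]
    rw [this]
    simp
  · by_cases hDx : D x = 1
    · by_cases hFy : F y = 1
      · have eD := ecount_formula hcard3 D hD1 hDs hDx (Ne.symm hxy)
        have eF := ecount_formula hcard3 F hF1 hFs hFy hxy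
        rw [ecount_symm F x y]
        calc (Nat.card {T : SimpleGraph V // good D T ∧ T.Adj x y}) *
              (Nat.card {T : SimpleGraph V // good F T ∧ T.Adj y x}) *
              ((∏ i, (D i - 1).factorial) * (∏ i, (F i - 1).factorial))
            = ((Nat.card {T : SimpleGraph V // good D T ∧ T.Adj x y}) *
                ∏ i, (D i - 1).factorial) *
              ((Nat.card {T : SimpleGraph V // good F T ∧ T.Adj y x}) *
                ∏ i, (F i - 1).factorial) := by ring
          _ = ((Fintype.card V - 3).factorial * (D y - 1)) *
              ((Fintype.card V - 3).factorial * (F x - 1)) := by rw [eD, eF]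
          _ = (Fintype.card V - 3).factorial * (Fintype.card V - 3).factorial *
              ((D x - 1) * (F y - 1) + (D y - 1) * (F x - 1)) := by
                rw [show D x - 1 = 0 from by omega]
                ring
      · have hDy : D y = 1 := by rcases hDF y with h | h; exact h; exact absurd h hFy
        rw [card_two_leaves hcard3 x y (Ne.symm hxy) D hDx hDy]
        rw [show D x - 1 = 0 from by omega, show D y - 1 = 0 from by omega]
        simp
    · have hFx : F x = 1 := by rcases hDF x with h | h; exact absurd h hDx; exact h
      by_cases hDy : D y = 1
      · have eD := ecount_formula hcard3 D hD1 hDs hDy hxy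
        have eF := ecount_formula hcard3 F hF1 hFs hFx (Ne.symm hxy)
        rw [ecount_symm D x y]
        calc (Nat.card {T : SimpleGraph V // good D T ∧ T.Adj y x}) *
              (Nat.card {T : SimpleGraph V // good F T ∧ T.Adj x y}) *
              ((∏ i, (D i - 1).factorial) * (∏ i, (F i - 1).factorial))
            = ((Nat.card {T : SimpleGraph V // good D T ∧ T.Adj y x}) *
                ∏ i, (D i - 1).factorial) *
              ((Nat.card {T : SimpleGraph V // good F T ∧ T.Adj x y}) *
                ∏ i, (F i - 1).factorial) := by ring
          _ = ((Fintype.card V - 3).factorial * (D x - 1)) *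
              ((Fintype.card V - 3).factorial * (F y - 1)) := by rw [eD, eF]
          _ = (Fintype.card V - 3).factorial * (Fintype.card V - 3).factorial *
              ((D x - 1) * (F y - 1) + (D y - 1) * (F x - 1)) := by
                rw [show D y - 1 = 0 from by omega]
                ring
      · have hFy : F y = 1 := by rcases hDF y with h | h; exact absurd h hDy; exact h
        rw [card_two_leaves hcard3 x y (Ne.symm hxy) F hFx hFy]
        rw [show F x - 1 = 0 from by omega, show F y - 1 = 0 from by omega]
        simp

lemma pair_count (T1 T2 : SimpleGraph V) :
    2 * (T1.edgeSet ∩ T2.edgeSet).ncard =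
    (Finset.univ.filter fun p : V × V => T1.Adj p.1 p.2 ∧ T2.Adj p.1 p.2).card := by
  have h := SimpleGraph.two_mul_card_edgeFinset (G := T1 ⊓ T2)
  rw [← SimpleGraph.edgeSet_inf, Set.ncard_eq_toFinset_card']
  convert h using 2
  congr!
  ext ⟨a, b⟩
  simp [SimpleGraph.inf_adj]

end Dev

open scoped Classical in
theorem expected_common_edges_eq_one (n : ℕ) (hn : 3 ≤ n) (D F : Fin n → ℕ)
    (hD : isTreeSeq D) (hF : isTreeSeq F) (hmin : ∀ i, min (D i) (F i) = 1) :
    (∑ T₁ ∈ Finset.univ.filter (fun T : SimpleGraph (Fin n) => T.IsTree ∧ realizes T D),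
        ∑ T₂ ∈ Finset.univ.filter (fun T : SimpleGraph (Fin n) => T.IsTree ∧ realizes T F),
          ((T₁.edgeSet ∩ T₂.edgeSet).ncard : ℚ)) /
      (((Finset.univ.filter (fun T : SimpleGraph (Fin n) => T.IsTree ∧ realizes T D)).card : ℚ) *
       ((Finset.univ.filter (fun T : SimpleGraph (Fin n) => T.IsTree ∧ realizes T F)).card : ℚ))
      = 1 := by
  have hc : Fintype.card (Fin n) = n := Fintype.card_fin n
  have hcard3 : 3 ≤ Fintype.card (Fin n) := by omega
  have hD1 := hD.1
  have hF1 := hF.1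
  have hDs : ∑ i, D i = 2 * Fintype.card (Fin n) - 2 := by rw [hc]; exact hD.2
  have hFs : ∑ i, F i = 2 * Fintype.card (Fin n) - 2 := by rw [hc]; exact hF.2
  set A := Finset.univ.filter (fun T : SimpleGraph (Fin n) => T.IsTree ∧ realizes T D) with hA
  set B := Finset.univ.filter (fun T : SimpleGraph (Fin n) => T.IsTree ∧ realizes T F) with hB
  set P := ∏ i, (D i - 1).factorial with hP
  set Q := ∏ i, (F i - 1).factorial with hQ
  set S : ℕ := ∑ T₁ ∈ A, ∑ T₂ ∈ B, (T₁.edgeSet ∩ T₂.edgeSet).ncard with hS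
  -- counts as Nat.card
  have hAt : A.card = tcount (Fin n) D := by
    rw [tcount, Nat.card_eq_fintype_card]
    exact (Fintype.card_of_subtype A (fun T => by
      simp only [hA, Finset.mem_filter, Finset.mem_univ, true_and]; simp [good, realizes])).symm
  have hBt : B.card = tcount (Fin n) F := by
    rw [tcount, Nat.card_eq_fintype_card]
    exact (Fintype.card_of_subtype B (fun T => by
      simp only [hB, Finset.mem_filter, Finset.mem_univ, true_and]; simp [good, realizes])).symm
  have hNDe : ∀ x y : Fin n, (A.filter fun T => T.Adj x y).card =
      Nat.card {T : SimpleGraph (Fin n) // good D T ∧ T.Adj x y} := by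
    intro x y
    rw [Nat.card_eq_fintype_card]
    exact (Fintype.card_of_subtype (p := fun T => good D T ∧ T.Adj x y)
      (A.filter fun T => T.Adj x y) (fun T => by
      simp only [hA, Finset.mem_filter, Finset.mem_univ, true_and]; simp [good, realizes, and_assoc])).symm
  have hNFe : ∀ x y : Fin n, (B.filter fun T => T.Adj x y).card =
      Nat.card {T : SimpleGraph (Fin n) // good F T ∧ T.Adj x y} := by
    intro x y
    rw [Nat.card_eq_fintype_card]
    exact (Fintype.card_of_subtype (p := fun T => good F T ∧ T.Adj x y)
      (B.filter fun T => T.Adj x y) (fun T => by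
      simp only [hB, Finset.mem_filter, Finset.mem_univ, true_and]; simp [good, realizes, and_assoc])).symm
  -- handshake double count
  have h2S : 2 * S = ∑ p : Fin n × Fin n,
      (A.filter fun T => T.Adj p.1 p.2).card * (B.filter fun T => T.Adj p.1 p.2).card := by
    calc 2 * S = ∑ T₁ ∈ A, ∑ T₂ ∈ B, 2 * (T₁.edgeSet ∩ T₂.edgeSet).ncard := by
          rw [hS, Finset.mul_sum]
          exact Finset.sum_congr rfl fun T₁ _ => Finset.mul_sum _ _ _
      _ = ∑ T₁ ∈ A, ∑ T₂ ∈ B, ∑ p : Fin n × Fin n,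
            (if T₁.Adj p.1 p.2 ∧ T₂.Adj p.1 p.2 then 1 else 0) := by
          refine Finset.sum_congr rfl fun T₁ _ => Finset.sum_congr rfl fun T₂ _ => ?_
          rw [pair_count T₁ T₂, Finset.card_filter]
      _ = ∑ p : Fin n × Fin n, ∑ T₁ ∈ A, ∑ T₂ ∈ B,
            (if T₁.Adj p.1 p.2 ∧ T₂.Adj p.1 p.2 then 1 else 0) := by
          exact (Finset.sum_congr rfl fun T₁ _ => Finset.sum_comm).trans Finset.sum_comm
      _ = ∑ p : Fin n × Fin n,
            (∑ T₁ ∈ A, if T₁.Adj p.1 p.2 then 1 else 0) *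
            (∑ T₂ ∈ B, if T₂.Adj p.1 p.2 then 1 else 0) := by
          refine Finset.sum_congr rfl fun p _ => ?_
          rw [Finset.sum_mul_sum]
          refine Finset.sum_congr rfl fun T₁ _ => Finset.sum_congr rfl fun T₂ _ => ?_
          by_cases h1 : T₁.Adj p.1 p.2 <;> by_cases h2 : T₂.Adj p.1 p.2 <;> simp [h1, h2]
      _ = ∑ p : Fin n × Fin n,
            (A.filter fun T => T.Adj p.1 p.2).card * (B.filter fun T => T.Adj p.1 p.2).card := by
          refine Finset.sum_congr rfl fun p _ => ?_
          rw [Finset.card_filter, Finset.card_filter]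
  -- sums of (d-1)
  have hsD : ∑ i, (D i - 1) = n - 2 := by
    have e4 : ∑ i, ((D i - 1) + 1) = ∑ i, D i :=
      Finset.sum_congr rfl (fun x _ => by have := hD1 x; omega)
    rw [Finset.sum_add_distrib, Finset.sum_const, Finset.card_univ, hc, smul_eq_mul,
      mul_one] at e4
    have := hD.2
    omega
  have hsF : ∑ i, (F i - 1) = n - 2 := by
    have e4 : ∑ i, ((F i - 1) + 1) = ∑ i, F i :=
      Finset.sum_congr rfl (fun x _ => by have := hF1 x; omega)
    rw [Finset.sum_add_distrib, Finset.sum_const, Finset.card_univ, hc, smul_eq_mul,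
      mul_one] at e4
    have := hF.2
    omega
  -- the grand identity
  have hgrand : 2 * (S * (P * Q)) =
      2 * ((n - 3).factorial * (n - 3).factorial * ((n - 2) * (n - 2))) := by
    calc 2 * (S * (P * Q)) = (2 * S) * (P * Q) := by ring
      _ = ∑ p : Fin n × Fin n,
            (A.filter fun T => T.Adj p.1 p.2).card *
            (B.filter fun T => T.Adj p.1 p.2).card * (P * Q) := by
          rw [h2S, Finset.sum_mul]
      _ = ∑ p : Fin n × Fin n, (n - 3).factorial * (n - 3).factorial *
            ((D p.1 - 1) * (F p.2 - 1) + (D p.2 - 1) * (F p.1 - 1)) := by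
          refine Finset.sum_congr rfl fun p _ => ?_
          rw [hNDe, hNFe, hP, hQ]
          have := master hcard3 D F hD1 hDs hF1 hFs hmin p.1 p.2
          rw [this, hc]
      _ = (n - 3).factorial * (n - 3).factorial *
            ∑ p : Fin n × Fin n,
            ((D p.1 - 1) * (F p.2 - 1) + (D p.2 - 1) * (F p.1 - 1)) := by
          rw [Finset.mul_sum]
      _ = 2 * ((n - 3).factorial * (n - 3).factorial * ((n - 2) * (n - 2))) := by
          have hsplit : ∑ p : Fin n × Fin n,
              ((D p.1 - 1) * (F p.2 - 1) + (D p.2 - 1) * (F p.1 - 1)) =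
              2 * ((n - 2) * (n - 2)) := by
            rw [Fintype.sum_prod_type]
            have e1 : ∀ x : Fin n, ∑ y : Fin n,
                ((D x - 1) * (F y - 1) + (D y - 1) * (F x - 1)) =
                (D x - 1) * (n - 2) + (n - 2) * (F x - 1) := by
              intro x
              rw [Finset.sum_add_distrib, ← Finset.mul_sum, ← Finset.sum_mul, hsD, hsF]
            rw [Finset.sum_congr rfl (fun x _ => e1 x), Finset.sum_add_distrib,
              ← Finset.sum_mul, ← Finset.mul_sum, hsD, hsF]
            ring
          rw [hsplit]
          ring
  have hSPQ : S * (P * Q) = (n - 3).factorial * (n - 3).factorial * ((n - 2) * (n - 2)) :=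
    Nat.eq_of_mul_eq_mul_left (by norm_num) hgrand
  -- the denominators
  have hAP : A.card * P = (n - 2).factorial := by
    rw [hAt, hP]
    have := tcount_mul_prod (V := Fin n) (by omega) D hD1 hDs
    rw [hc] at this
    exact this
  have hBQ : B.card * Q = (n - 2).factorial := by
    rw [hBt, hQ]
    have := tcount_mul_prod (V := Fin n) (by omega) F hF1 hFs
    rw [hc] at this
    exact this
  have hfact : (n - 2).factorial = (n - 2) * (n - 3).factorial := by
    rw [show n - 2 = (n - 3) + 1 from by omega, Nat.factorial_succ]
  have hProdPos : 0 < P * Q := by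
    rw [hP, hQ]
    apply Nat.mul_pos <;> exact Finset.prod_pos (fun i _ => Nat.factorial_pos _)
  have hSeq : S = A.card * B.card := by
    apply Nat.eq_of_mul_eq_mul_right hProdPos
    rw [hSPQ]
    calc (n - 3).factorial * (n - 3).factorial * ((n - 2) * (n - 2))
        = ((n - 2) * (n - 3).factorial) * ((n - 2) * (n - 3).factorial) := by ring
      _ = (n - 2).factorial * (n - 2).factorial := by rw [hfact]
      _ = (A.card * P) * (B.card * Q) := by rw [hAP, hBQ]
      _ = A.card * B.card * (P * Q) := by ring
  -- positivity of counts
  have hApos : 0 < A.card := by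
    rw [hAt]
    exact tcount_pos (by omega) D hD1 hDs
  have hBpos : 0 < B.card := by
    rw [hBt]
    exact tcount_pos (by omega) F hF1 hFs
  -- conclude over ℚ
  have hnum : (∑ T₁ ∈ A, ∑ T₂ ∈ B, ((T₁.edgeSet ∩ T₂.edgeSet).ncard : ℚ)) = (S : ℚ) := by
    rw [hS]
    push_cast
    rfl
  rw [hnum, hSeq]
  push_cast
  have h1 : (A.card : ℚ) ≠ 0 := Nat.cast_ne_zero.mpr hApos.ne'
  have h2 : (B.card : ℚ) ≠ 0 := Nat.cast_ne_zero.mpr hBpos.ne'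
  exact div_self (mul_ne_zero h1 h2)
end

section
/- Let D = (d_1,...,d_n) and F = (f_1,...,f_n) be tree degree sequences with min(d_i,f_i) = 1 for all i and neither containing the value n − 1. Choose indices i_1 ≠ i_2 with d_{i_1}, d_{i_2} > 1 and j_1 ≠ j_2 with f_{j_1}, f_{j_2} > 1. Then the number of pairs (T_1, T_2) of labeled trees, with T_1 realizing D, T_2 realizing F, both containing the edges {v_{i_1}, v_{j_1}} and {v_{i_2}, v_{j_2}}, is at least [(n−4)! / ((d_{i_1}−2)!(d_{i_2}−2)! ∏_{k≠i_1,i_2}(d_k−1)!)] · [(n−4)! / ((f_{j_1}−2)!(f_{j_2}−2)! ∏_{k≠j_1,j_2}(f_k−1)!)]. -/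
set_option linter.unusedSectionVars false
set_option linter.unreachableTactic false
set_option linter.unusedTactic false
set_option linter.unusedVariables false
set_option maxHeartbeats 1000000

section Aux

open SimpleGraph Finset

variable {V : Type} [Fintype V] [DecidableEq V]

def extLeaf (v u₀ : V) (G' : SimpleGraph {u : V // u ≠ v}) : SimpleGraph V where
  Adj x y := x ≠ y ∧ ((∃ (hx : x ≠ v) (hy : y ≠ v), G'.Adj ⟨x, hx⟩ ⟨y, hy⟩) ∨
    (x = v ∧ y = u₀) ∨ (x = u₀ ∧ y = v))
  symm := ⟨by
    rintro x y ⟨hne, h | h | h⟩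
    · exact ⟨hne.symm, Or.inl ⟨h.choose_spec.choose, h.choose, h.choose_spec.choose_spec.symm⟩⟩
    · exact ⟨hne.symm, Or.inr (Or.inr ⟨h.2, h.1⟩)⟩
    · exact ⟨hne.symm, Or.inr (Or.inl ⟨h.2, h.1⟩)⟩⟩
  loopless := ⟨fun x h => h.1 rfl⟩

variable {v u₀ : V} {G' : SimpleGraph {u : V // u ≠ v}}

lemma extLeaf_adj_lift (a b : {u : V // u ≠ v}) :
    (extLeaf v u₀ G').Adj a.1 b.1 ↔ G'.Adj a b := by
  constructor
  · rintro ⟨hne, ⟨hx, hy, h⟩ | ⟨h1, h2⟩ | ⟨h1, h2⟩⟩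
    · convert h <;> exact (Subtype.ext rfl)
    · exact absurd h1 a.2
    · exact absurd h2 b.2
  · intro h
    exact ⟨fun hh => G'.ne_of_adj h (Subtype.ext hh), Or.inl ⟨a.2, b.2, by
      convert h <;> exact (Subtype.ext rfl)⟩⟩

lemma extLeaf_adj_v (hu : u₀ ≠ v) (y : V) : (extLeaf v u₀ G').Adj v y ↔ y = u₀ := by
  constructor
  · rintro ⟨hne, ⟨hx, hy, h⟩ | ⟨h1, h2⟩ | ⟨h1, h2⟩⟩
    · exact absurd rfl hx
    · exact h2
    · exact absurd h2.symm hne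
  · rintro rfl
    exact ⟨fun h => hu h.symm, Or.inr (Or.inl ⟨rfl, rfl⟩)⟩

lemma extLeaf_adj_cases {x y : V} (hx : x ≠ v) (h : (extLeaf v u₀ G').Adj x y) :
    (∃ (hy : y ≠ v), G'.Adj ⟨x, hx⟩ ⟨y, hy⟩) ∨ (x = u₀ ∧ y = v) := by
  obtain ⟨hne, ⟨hx', hy', h'⟩ | ⟨h1, h2⟩ | ⟨h1, h2⟩⟩ := h
  · exact Or.inl ⟨hy', h'⟩
  · exact absurd h1 hx
  · exact Or.inr ⟨h1, h2⟩

/-- Transfer a walk avoiding `v` in the extension down to `G'`. -/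
def extDown : ∀ {x y : V} (p : (extLeaf v u₀ G').Walk x y) (hx : x ≠ v) (hy : y ≠ v),
    (∀ z ∈ p.support, z ≠ v) → G'.Walk ⟨x, hx⟩ ⟨y, hy⟩
  | x, _, SimpleGraph.Walk.nil, hx, hy, _ => SimpleGraph.Walk.nil
  | x, y, @SimpleGraph.Walk.cons _ _ _ b _ h q, hx, hy, hs =>
    SimpleGraph.Walk.cons
      ((extLeaf_adj_lift ⟨x, hx⟩ ⟨b, hs b (by simp)⟩).mp h)
      (extDown q (hs b (by simp)) hy (fun z hz => hs z (by simp [hz])))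

lemma extDown_support {x y : V} (p : (extLeaf v u₀ G').Walk x y) (hx : x ≠ v) (hy : y ≠ v)
    (hs : ∀ z ∈ p.support, z ≠ v) :
    (extDown p hx hy hs).support.map Subtype.val = p.support := by
  induction p with
  | nil => simp [extDown]
  | cons h q ih => simp [extDown, ih]

lemma extDown_edges {x y : V} (p : (extLeaf v u₀ G').Walk x y) (hx : x ≠ v) (hy : y ≠ v)
    (hs : ∀ z ∈ p.support, z ≠ v) :
    (extDown p hx hy hs).edges.map (Sym2.map Subtype.val) = p.edges := by
  induction p with
  | nil => simp [extDown]
  | cons h q ih => simp [extDown, ih]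

/-- The homomorphism from `G'` into the extension. -/
def extHom : G' →g (extLeaf v u₀ G') where
  toFun := Subtype.val
  map_rel' := fun {a b} h => (extLeaf_adj_lift a b).mpr h

lemma extLeaf_connected (hu : u₀ ≠ v) (hG' : G'.Connected) :
    (extLeaf v u₀ G').Connected := by
  have hreach : ∀ x : V, x ≠ v → (extLeaf v u₀ G').Reachable x u₀ := by
    intro x hx
    exact (hG'.preconnected ⟨x, hx⟩ ⟨u₀, hu⟩).map (extHom)
  rw [SimpleGraph.connected_iff]
  refine ⟨fun x y => ?_, ⟨v⟩⟩
  by_cases hx : x = v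
  · by_cases hy : y = v
    · subst hx hy; rfl
    · subst hx
      exact (SimpleGraph.Adj.reachable ((extLeaf_adj_v hu u₀).mpr rfl)).trans
        (hreach y hy).symm
  · by_cases hy : y = v
    · subst hy
      exact (hreach x hx).trans
        (SimpleGraph.Adj.reachable ((extLeaf_adj_v hu u₀).mpr rfl)).symm
    · exact (hreach x hx).trans (hreach y hy).symm

private lemma list_tail_map {α β : Type*} (f : α → β) (l : List α) :
    (l.map f).tail = l.tail.map f := by cases l <;> simp

lemma extLeaf_isAcyclic (hu : u₀ ≠ v) (hG' : G'.IsAcyclic) :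
    (extLeaf v u₀ G').IsAcyclic := by
  intro x c hc
  by_cases hv : v ∈ c.support
  · -- rotate the cycle to start at `v`
    have hc₂c : (c.rotate v hv).IsCycle := hc.rotate hv
    obtain ⟨b, h, q, hc₂eq⟩ := (SimpleGraph.Walk.not_nil_iff).mp hc₂c.not_nil
    have hb : b = u₀ := (extLeaf_adj_v hu b).mp h
    have hbv : v ≠ b := fun hh => hu (hh ▸ hb).symm
    obtain ⟨z, h', r, hq⟩ := q.reverse.exists_eq_cons_of_ne hbv
    have hz : z = b := ((extLeaf_adj_v hu z).mp h').trans hb.symm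
    have hedge : s(v, b) ∈ q.edges := by
      have h2 : s(v, z) ∈ q.reverse.edges := by rw [hq]; simp
      rw [hz] at h2; simpa using h2
    rw [hc₂eq] at hc₂c
    have hnd := hc₂c.edges_nodup
    simp only [SimpleGraph.Walk.edges_cons, List.nodup_cons] at hnd
    exact hnd.1 hedge
  · -- transfer the cycle to G'
    have hx : x ≠ v := fun hxv => hv (hxv ▸ c.start_mem_support)
    have hs : ∀ z ∈ c.support, z ≠ v := fun z hz hzv => hv (hzv ▸ hz)
    have hcd : (extDown c hx hx hs).IsCycle := by
      constructor
      · constructor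
        · exact ⟨((extDown_edges c hx hx hs) ▸ hc.edges_nodup).of_map⟩
        · intro hnil
          have h0 := congrArg (List.map Subtype.val)
            (congrArg SimpleGraph.Walk.support hnil)
          rw [extDown_support] at h0
          have hlen := congrArg List.length h0
          simp only [List.length_map, SimpleGraph.Walk.length_support,
            List.length_cons, SimpleGraph.Walk.support_nil, List.length_nil] at hlen
          have h3 := hc.three_le_length
          omega
      · have h1 : (extDown c hx hx hs).support.tail.map Subtype.val = c.support.tail := by
          rw [← list_tail_map, extDown_support]
        exact List.Nodup.of_map _ (h1 ▸ hc.support_nodup)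
    exact hG' _ hcd

lemma extLeaf_nbhd_v (hu : u₀ ≠ v) : {y | (extLeaf v u₀ G').Adj v y} = {u₀} := by
  ext y; simp [extLeaf_adj_v hu y]

lemma extLeaf_nbhd (hu : u₀ ≠ v) {w : V} (hw : w ≠ v) :
    {y | (extLeaf v u₀ G').Adj w y}.ncard
      = {b | G'.Adj ⟨w, hw⟩ b}.ncard + (if w = u₀ then 1 else 0) := by
  have himage : {y | (extLeaf v u₀ G').Adj w y} =
      (Subtype.val '' {b | G'.Adj ⟨w, hw⟩ b}) ∪ (if w = u₀ then {v} else ∅) := by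
    ext y
    simp only [Set.mem_union, Set.mem_image, Set.mem_setOf_eq]
    constructor
    · intro h
      rcases extLeaf_adj_cases hw h with ⟨hy, h'⟩ | ⟨h1, h2⟩
      · exact Or.inl ⟨⟨y, hy⟩, h', rfl⟩
      · subst h1 h2; simp
    · rintro (⟨b, hb, rfl⟩ | hy)
      · exact (extLeaf_adj_lift ⟨w, hw⟩ b).mpr hb
      · rcases Classical.em (w = u₀) with h1 | h1
        · simp only [if_pos h1, Set.mem_singleton_iff] at hy
          rw [h1, hy]
          exact ((extLeaf_adj_v hu u₀).mpr rfl).symm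
        · simp [if_neg h1] at hy
  rw [himage]
  rcases Classical.em (w = u₀) with h1 | h1
  · rw [if_pos h1, if_pos h1, Set.union_singleton,
      Set.ncard_insert_of_notMem (by rintro ⟨b, _, hbv⟩; exact b.2 hbv) (Set.toFinite _),
      Set.ncard_image_of_injective _ Subtype.val_injective]
  · rw [if_neg h1, if_neg h1, Set.union_empty,
      Set.ncard_image_of_injective _ Subtype.val_injective, Nat.add_zero]

lemma extLeaf_injective (hu : u₀ ≠ v) :
    Function.Injective (extLeaf v u₀ : SimpleGraph {u : V // u ≠ v} → SimpleGraph V) := by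
  intro G₁ G₂ h
  ext a b
  constructor
  · intro hab
    have h2 := (extLeaf_adj_lift (u₀ := u₀) (G' := G₁) a b).mpr hab
    rw [h] at h2
    exact (extLeaf_adj_lift a b).mp h2
  · intro hab
    have h2 := (extLeaf_adj_lift (u₀ := u₀) (G' := G₂) a b).mpr hab
    rw [← h] at h2
    exact (extLeaf_adj_lift a b).mp h2


end Aux

section Count

open SimpleGraph Finset

lemma sum_ncard_le {α ι : Type*} [Finite α] (T : Finset ι) (f : ι → Set α) (S : Set α)
    (hsub : ∀ i ∈ T, f i ⊆ S)
    (hdisj : ∀ i ∈ T, ∀ j ∈ T, i ≠ j → Disjoint (f i) (f j)) :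
    ∑ i ∈ T, (f i).ncard ≤ S.ncard := by
  classical
  have key : ∀ (T' : Finset ι), (∀ i ∈ T', ∀ j ∈ T', i ≠ j → Disjoint (f i) (f j)) →
      ∑ i ∈ T', (f i).ncard = (⋃ i ∈ (T' : Set ι), f i).ncard := by
    intro T'
    induction T' using Finset.induction_on with
    | empty => simp
    | insert a s ha ih =>
      intro hd
      rw [Finset.sum_insert ha, ih (fun i hi j hj hij => hd i (by simp [hi]) j (by simp [hj]) hij)]
      rw [Finset.coe_insert, Set.biUnion_insert]
      rw [Set.ncard_union_eq ?_ (Set.toFinite _) (Set.toFinite _)]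
      rw [Set.disjoint_iUnion_right]
      intro i
      rw [Set.disjoint_iUnion_right]
      intro hi
      exact hd a (by simp) i (Finset.mem_insert_of_mem (by simpa using hi)) (fun hai => ha (hai ▸ (by simpa using hi)))
  rw [key T hdisj]
  exact Set.ncard_le_ncard (by simpa using hsub) (Set.toFinite _)

/-- The number of labeled trees with degree sequence `d` is at least
`(m-2)! / ∏ (d x - 1)!`. -/
lemma count_trees : ∀ (m : ℕ), ∀ (V : Type) [Fintype V] [DecidableEq V], ∀ (d : V → ℕ),
    Fintype.card V = m → (∀ x, 1 ≤ d x) → (∑ x, d x) = 2 * m - 2 → 2 ≤ m →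
    (m - 2).factorial ≤
      {G : SimpleGraph V | G.IsTree ∧ ∀ w, {y | G.Adj w y}.ncard = d w}.ncard *
        ∏ x, (d x - 1).factorial := by
  intro m
  induction m using Nat.strong_induction_on with
  | _ m ih =>
  intro V _ _ d hcard hpos hsum hm
  rcases eq_or_lt_of_le hm with h2 | h3
  · -- base case : m = 2
    subst hcard
    have hd1 : ∀ x : V, d x = 1 := by
      intro x
      have h1 : ∑ y ∈ univ.erase x, d y + d x = ∑ y, d y :=
        Finset.sum_erase_add _ _ (mem_univ x)
      have h2' : (univ.erase x).card = 1 := by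
        rw [Finset.card_erase_of_mem (mem_univ x), Finset.card_univ]; omega
      have h3' : 1 ≤ ∑ y ∈ univ.erase x, d y := by
        have hh := Finset.card_nsmul_le_sum (univ.erase x) d 1 (fun y _ => hpos y)
        rw [h2'] at hh
        simpa using hh
      have := hpos x
      omega
    have hne : Nonempty V := by
      rw [← Fintype.card_pos_iff]; omega
    have htop : (⊤ : SimpleGraph V) ∈
        {G : SimpleGraph V | G.IsTree ∧ ∀ w, {y | G.Adj w y}.ncard = d w} := by
      constructor
      · constructor
        · exact connected_top
        · intro x c hc
          have h1 := hc.three_le_length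
          have h2' : c.support.tail.length ≤ 2 := by
            have := (hc.2).length_le_card
            omega
          have h3' : c.support.tail.length = c.length := by
            have := c.length_support
            simp only [List.length_tail, this]
            omega
          omega
      · intro w
        have : {y | (⊤ : SimpleGraph V).Adj w y} = {w}ᶜ := by
          ext y; simp [SimpleGraph.top_adj, ne_comm]
        rw [this, hd1 w, Set.ncard_eq_toFinset_card']
        simp only [Set.toFinset_compl, Set.toFinset_singleton, Finset.card_compl,
          Finset.card_singleton]
        omega
    rw [← h2]
    norm_num
    refine Nat.one_le_iff_ne_zero.mpr (Nat.mul_ne_zero ?_ ?_)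
    · have : 0 < {G : SimpleGraph V | G.IsTree ∧ ∀ w, {y | G.Adj w y}.ncard = d w}.ncard :=
        (Set.ncard_pos (Set.toFinite _)).mpr ⟨⊤, htop⟩
      omega
    · exact Nat.pos_iff_ne_zero.mp (Finset.prod_pos (fun x _ => Nat.factorial_pos _))
  · -- inductive step : m ≥ 3
    obtain ⟨v, hv⟩ : ∃ v : V, d v = 1 := by
      by_contra hno
      push_neg at hno
      have h2' := Finset.card_nsmul_le_sum univ d 2
        (fun x _ => by have := hpos x; have := hno x; omega)
      rw [Finset.card_univ, hcard, hsum, smul_eq_mul] at h2'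
      omega
    set S := {G : SimpleGraph V | G.IsTree ∧ ∀ w, {y | G.Adj w y}.ncard = d w} with hS
    set T : Finset V := (univ.erase v).filter (fun u => 2 ≤ d u) with hT
    set f : V → Set (SimpleGraph V) := fun u =>
      {G | (G.IsTree ∧ ∀ w, {y | G.Adj w y}.ncard = d w) ∧ G.Adj v u} with hf
    have hsub : ∀ u ∈ T, f u ⊆ S := fun u hu G hG => hG.1
    have hdisj : ∀ u ∈ T, ∀ u' ∈ T, u ≠ u' → Disjoint (f u) (f u') := by
      intro u hu u' hu' huu
      rw [Set.disjoint_left]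
      rintro G ⟨hG, hadj⟩ ⟨hG', hadj'⟩
      have h1 := hG.2 v
      rw [hv] at h1
      obtain ⟨a, ha⟩ := Set.ncard_eq_one.mp h1
      have e1 : u = a := by
        have hm1 : u ∈ {y | G.Adj v y} := hadj
        rw [ha] at hm1; exact hm1
      have e2 : u' = a := by
        have hm2 : u' ∈ {y | G.Adj v y} := hadj'
        rw [ha] at hm2; exact hm2
      exact huu (e1.trans e2.symm)
    have key : ∀ u ∈ T, (d u - 1) * (m - 3).factorial ≤
        (f u).ncard * ∏ x, (d x - 1).factorial := by
      intro u hu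
      have huv : u ≠ v := (Finset.mem_erase.mp (Finset.mem_filter.mp hu).1).1
      have hdu : 2 ≤ d u := (Finset.mem_filter.mp hu).2
      set g : V → ℕ := fun x => if x = u then d u - 1 else d x with hg
      set d' : {x : V // x ≠ v} → ℕ := fun w => g w.1 with hd'
      have gv : g v = 1 := by rw [hg]; simp [Ne.symm huv, hv]
      have gu : g u = d u - 1 := by rw [hg]; simp
      have hcard' : Fintype.card {x : V // x ≠ v} = m - 1 := by
        rw [Fintype.card_subtype_compl, Fintype.card_subtype_eq, hcard]
      have hpos' : ∀ w : {x : V // x ≠ v}, 1 ≤ d' w := by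
        intro w
        rw [hd']
        simp only [hg]
        by_cases hwu : w.1 = u
        · rw [if_pos hwu]; omega
        · rw [if_neg hwu]; exact hpos _
      have hsub1 : ∑ x ∈ univ.erase v, g x = ∑ w : {x : V // x ≠ v}, d' w :=
        Finset.sum_subtype _ (by simp) g
      have e2 : ∑ x ∈ univ.erase v, g x + g v = ∑ x, g x :=
        Finset.sum_erase_add _ _ (mem_univ v)
      have e3 : ∑ x ∈ univ.erase u, g x = ∑ x ∈ univ.erase u, d x :=
        Finset.sum_congr rfl (fun x hx => by
          simp only [hg, if_neg (Finset.mem_erase.mp hx).1])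
      have e4 : ∑ x ∈ univ.erase u, g x + g u = ∑ x, g x :=
        Finset.sum_erase_add _ _ (mem_univ u)
      have e5 : ∑ x ∈ univ.erase u, d x + d u = ∑ x, d x :=
        Finset.sum_erase_add _ _ (mem_univ u)
      have hsum' : ∑ w : {x : V // x ≠ v}, d' w = 2 * (m - 1) - 2 := by
        rw [← hsub1]; omega
      -- products
      have p1 : ∏ x ∈ univ.erase v, (g x - 1).factorial
          = ∏ w : {x : V // x ≠ v}, (d' w - 1).factorial :=
        Finset.prod_subtype _ (by simp) (fun x => (g x - 1).factorial)
      have p2 : (∏ x ∈ univ.erase v, (g x - 1).factorial) * (g v - 1).factorial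
          = ∏ x, (g x - 1).factorial := Finset.prod_erase_mul _ _ (mem_univ v)
      have p3 : ∏ x ∈ univ.erase u, (g x - 1).factorial
          = ∏ x ∈ univ.erase u, (d x - 1).factorial :=
        Finset.prod_congr rfl (fun x hx => by
          simp only [hg, if_neg (Finset.mem_erase.mp hx).1])
      have p4 : (∏ x ∈ univ.erase u, (g x - 1).factorial) * (g u - 1).factorial
          = ∏ x, (g x - 1).factorial := Finset.prod_erase_mul _ _ (mem_univ u)
      have p5 : (∏ x ∈ univ.erase u, (d x - 1).factorial) * (d u - 1).factorial
          = ∏ x, (d x - 1).factorial := Finset.prod_erase_mul _ _ (mem_univ u)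
      have hA : ∏ w : {x : V // x ≠ v}, (d' w - 1).factorial
          = (∏ x ∈ univ.erase u, (d x - 1).factorial) * (d u - 2).factorial := by
        rw [← p1]
        have : ∏ x ∈ univ.erase v, (g x - 1).factorial
            = (∏ x ∈ univ.erase v, (g x - 1).factorial) * (g v - 1).factorial := by
          rw [gv]; norm_num
        rw [this, p2, ← p4, p3, gu, show d u - 1 - 1 = d u - 2 from by omega]
      have hC : (d u - 1).factorial = (d u - 1) * (d u - 2).factorial := by
        rw [show d u - 1 = (d u - 2) + 1 from by omega, Nat.factorial_succ]
      have hB : ∏ x, (d x - 1).factorial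
          = (d u - 1) * ∏ w : {x : V // x ≠ v}, (d' w - 1).factorial := by
        rw [hA, ← p5, hC]; ring
      -- the injection via extLeaf
      set S' := {G' : SimpleGraph {x : V // x ≠ v} |
        G'.IsTree ∧ ∀ w, {y | G'.Adj w y}.ncard = d' w} with hS'
      have hmap : ∀ G' ∈ S', extLeaf v u G' ∈ f u := by
        intro G' hG'
        refine ⟨⟨⟨extLeaf_connected huv hG'.1.isConnected,
          extLeaf_isAcyclic huv hG'.1.IsAcyclic⟩, ?_⟩, (extLeaf_adj_v huv u).mpr rfl⟩
        intro w
        by_cases hw : w = v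
        · subst hw
          rw [extLeaf_nbhd_v huv, Set.ncard_singleton, hv]
        · rw [extLeaf_nbhd huv hw, hG'.2 ⟨w, hw⟩,
            show d' ⟨w, hw⟩ = if w = u then d u - 1 else d w from rfl]
          by_cases hwu : w = u
          · rw [if_pos hwu, if_pos hwu, hwu]
            omega
          · rw [if_neg hwu, if_neg hwu]
            omega
      have hinj : S'.ncard ≤ (f u).ncard := by
        calc S'.ncard = (extLeaf v u '' S').ncard :=
              (Set.ncard_image_of_injective _ (extLeaf_injective huv)).symm
        _ ≤ (f u).ncard := Set.ncard_le_ncard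
              (by rintro G ⟨G', hG', rfl⟩; exact hmap G' hG') (Set.toFinite _)
      have hIH := ih (m - 1) (by omega) {x : V // x ≠ v} d' hcard' hpos' hsum' (by omega)
      rw [show m - 1 - 2 = m - 3 from by omega] at hIH
      calc (d u - 1) * (m - 3).factorial
          ≤ (d u - 1) * (S'.ncard * ∏ w : {x : V // x ≠ v}, (d' w - 1).factorial) :=
            Nat.mul_le_mul_left _ hIH
        _ = S'.ncard * ((d u - 1) * ∏ w : {x : V // x ≠ v}, (d' w - 1).factorial) := by ring
        _ = S'.ncard * ∏ x, (d x - 1).factorial := by rw [← hB]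
        _ ≤ (f u).ncard * ∏ x, (d x - 1).factorial := Nat.mul_le_mul_right _ hinj
    have hsumT : ∑ u ∈ T, (d u - 1) = m - 2 := by
      have t1 : ∑ u ∈ T, (d u - 1) = ∑ u ∈ univ.erase v, (d u - 1) := by
        refine Finset.sum_subset (Finset.filter_subset _ _) (fun x hx hnx => ?_)
        rw [hT] at hnx
        simp only [Finset.mem_filter, hx, true_and, not_le] at hnx
        omega
      have hce : (univ.erase v).card = m - 1 := by
        rw [Finset.card_erase_of_mem (mem_univ v), Finset.card_univ, hcard]
      have t2 : ∑ u ∈ univ.erase v, (d u - 1) + (m - 1) = ∑ u ∈ univ.erase v, d u := by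
        rw [← hce, Finset.card_eq_sum_ones, ← Finset.sum_add_distrib]
        exact Finset.sum_congr rfl (fun x hx => by have := hpos x; omega)
      have t3 : ∑ u ∈ univ.erase v, d u + d v = ∑ x, d x :=
        Finset.sum_erase_add _ _ (mem_univ v)
      omega
    calc (m - 2).factorial = (m - 2) * (m - 3).factorial := by
          rw [show m - 2 = m - 3 + 1 from by omega, Nat.factorial_succ]
      _ = (∑ u ∈ T, (d u - 1)) * (m - 3).factorial := by rw [hsumT]
      _ = ∑ u ∈ T, (d u - 1) * (m - 3).factorial := by rw [Finset.sum_mul]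
      _ ≤ ∑ u ∈ T, (f u).ncard * ∏ x, (d x - 1).factorial := Finset.sum_le_sum key
      _ = (∑ u ∈ T, (f u).ncard) * ∏ x, (d x - 1).factorial := by rw [Finset.sum_mul]
      _ ≤ S.ncard * ∏ x, (d x - 1).factorial :=
            Nat.mul_le_mul_right _ (sum_ncard_le T f S hsub hdisj)

lemma two_ext {n : ℕ} (d : Fin n → ℕ) (a₁ a₂ b₁ b₂ : Fin n)
    (ha : a₁ ≠ a₂) (hb : b₁ ≠ b₂)
    (hpos : ∀ i, 1 ≤ d i) (hsum : ∑ i, d i = 2 * n - 2)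
    (hda₁ : 2 ≤ d a₁) (hda₂ : 2 ≤ d a₂) (hdb₁ : d b₁ = 1) (hdb₂ : d b₂ = 1) :
    (n - 4).factorial ≤
      {G : SimpleGraph (Fin n) | G.IsTree ∧ (∀ w, {y | G.Adj w y}.ncard = d w) ∧
          G.Adj a₁ b₁ ∧ G.Adj a₂ b₂}.ncard *
        ((d a₁ - 2).factorial * (d a₂ - 2).factorial *
          ∏ k ∈ (Finset.univ.erase a₁).erase a₂, (d k - 1).factorial) := by
  classical
  have ha1b1 : a₁ ≠ b₁ := fun h => by rw [h] at hda₁; omega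
  have ha1b2 : a₁ ≠ b₂ := fun h => by rw [h] at hda₁; omega
  have ha2b1 : a₂ ≠ b₁ := fun h => by rw [h] at hda₂; omega
  have ha2b2 : a₂ ≠ b₂ := fun h => by rw [h] at hda₂; omega
  have hn4 : 4 ≤ n := by
    have hcard4 : ({a₁, a₂, b₁, b₂} : Finset (Fin n)).card = 4 := by
      rw [Finset.card_insert_of_notMem (by simp [ha, ha1b1, ha1b2]),
        Finset.card_insert_of_notMem (by simp [ha2b1, ha2b2]),
        Finset.card_insert_of_notMem (by simp [hb]), Finset.card_singleton]
    have hle := Finset.card_le_univ ({a₁, a₂, b₁, b₂} : Finset (Fin n))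
    rw [hcard4, Fintype.card_fin] at hle
    exact hle
  -- the two nested subtypes
  set vb₂ : {x : Fin n // x ≠ b₁} := ⟨b₂, Ne.symm hb⟩ with hvb₂
  set va₂ : {x : Fin n // x ≠ b₁} := ⟨a₂, ha2b1⟩ with hva₂
  have hva₂vb₂ : va₂ ≠ vb₂ := fun h => ha2b2 (by simpa [hva₂, hvb₂, Subtype.ext_iff] using h)
  set g : Fin n → ℕ := fun x => if x = a₁ then d a₁ - 1 else if x = a₂ then d a₂ - 1 else d x
    with hg
  set d₂ : {w : {x : Fin n // x ≠ b₁} // w ≠ vb₂} → ℕ := fun w => g w.1.1 with hd₂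
  have ga₁ : g a₁ = d a₁ - 1 := by rw [hg]; simp
  have ga₂ : g a₂ = d a₂ - 1 := by rw [hg]; simp [Ne.symm ha]
  have gb₁ : g b₁ = 1 := by rw [hg]; simp [Ne.symm ha1b1, Ne.symm ha2b1, hdb₁]
  have gb₂ : g b₂ = 1 := by rw [hg]; simp [Ne.symm ha1b2, Ne.symm ha2b2, hdb₂]
  have hcard₁ : Fintype.card {x : Fin n // x ≠ b₁} = n - 1 := by
    rw [Fintype.card_subtype_compl, Fintype.card_subtype_eq, Fintype.card_fin]
  have hcard₂ : Fintype.card {w : {x : Fin n // x ≠ b₁} // w ≠ vb₂} = n - 2 := by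
    rw [Fintype.card_subtype_compl, Fintype.card_subtype_eq, hcard₁]
    omega
  have hpos₂ : ∀ w, 1 ≤ d₂ w := by
    intro w
    rw [hd₂]
    simp only [hg]
    split
    · omega
    · split
      · omega
      · exact hpos _
  -- sums
  have s1 : ∑ w ∈ (univ : Finset {x : Fin n // x ≠ b₁}).erase vb₂, g w.1
      = ∑ w : {w : {x : Fin n // x ≠ b₁} // w ≠ vb₂}, d₂ w :=
    Finset.sum_subtype _ (by simp) (fun (w : {x : Fin n // x ≠ b₁}) => g w.1)
  have s2 : ∑ w ∈ (univ : Finset {x : Fin n // x ≠ b₁}).erase vb₂, g w.1 + g vb₂.1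
      = ∑ w : {x : Fin n // x ≠ b₁}, g w.1 := Finset.sum_erase_add _ _ (mem_univ vb₂)
  have s3 : ∑ x ∈ (univ : Finset (Fin n)).erase b₁, g x
      = ∑ w : {x : Fin n // x ≠ b₁}, g w.1 :=
    Finset.sum_subtype _ (by simp) g
  have s4 : ∑ x ∈ (univ : Finset (Fin n)).erase b₁, g x + g b₁ = ∑ x, g x :=
    Finset.sum_erase_add _ _ (mem_univ b₁)
  have ha₂mem : a₂ ∈ (univ : Finset (Fin n)).erase a₁ := by simp [Ne.symm ha]
  have u1 : ∑ x ∈ ((univ : Finset (Fin n)).erase a₁).erase a₂, g x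
      = ∑ x ∈ ((univ : Finset (Fin n)).erase a₁).erase a₂, d x := by
    refine Finset.sum_congr rfl (fun x hx => ?_)
    have hx2 := Finset.mem_erase.mp hx
    have hx1 := Finset.mem_erase.mp hx2.2
    rw [hg]
    simp [hx1.1, hx2.1]
  have u2 : ∑ x ∈ ((univ : Finset (Fin n)).erase a₁).erase a₂, g x + g a₂
      = ∑ x ∈ (univ : Finset (Fin n)).erase a₁, g x := Finset.sum_erase_add _ _ ha₂mem
  have u3 : ∑ x ∈ (univ : Finset (Fin n)).erase a₁, g x + g a₁ = ∑ x, g x :=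
    Finset.sum_erase_add _ _ (mem_univ a₁)
  have u4 : ∑ x ∈ ((univ : Finset (Fin n)).erase a₁).erase a₂, d x + d a₂
      = ∑ x ∈ (univ : Finset (Fin n)).erase a₁, d x := Finset.sum_erase_add _ _ ha₂mem
  have u5 : ∑ x ∈ (univ : Finset (Fin n)).erase a₁, d x + d a₁ = ∑ x, d x :=
    Finset.sum_erase_add _ _ (mem_univ a₁)
  have hgb₂1 : g vb₂.1 = 1 := gb₂
  have hsum₂ : ∑ w : {w : {x : Fin n // x ≠ b₁} // w ≠ vb₂}, d₂ w = 2 * (n - 2) - 2 := by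
    rw [← s1]
    omega
  -- products
  have q1 : ∏ w ∈ (univ : Finset {x : Fin n // x ≠ b₁}).erase vb₂, (g w.1 - 1).factorial
      = ∏ w : {w : {x : Fin n // x ≠ b₁} // w ≠ vb₂}, (d₂ w - 1).factorial :=
    Finset.prod_subtype _ (by simp) (fun (w : {x : Fin n // x ≠ b₁}) => (g w.1 - 1).factorial)
  have q2 : (∏ w ∈ (univ : Finset {x : Fin n // x ≠ b₁}).erase vb₂, (g w.1 - 1).factorial)
        * (g vb₂.1 - 1).factorial
      = ∏ w : {x : Fin n // x ≠ b₁}, (g w.1 - 1).factorial :=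
    Finset.prod_erase_mul _ _ (mem_univ vb₂)
  have q3 : ∏ x ∈ (univ : Finset (Fin n)).erase b₁, (g x - 1).factorial
      = ∏ w : {x : Fin n // x ≠ b₁}, (g w.1 - 1).factorial :=
    Finset.prod_subtype _ (by simp) (fun x => (g x - 1).factorial)
  have q4 : (∏ x ∈ (univ : Finset (Fin n)).erase b₁, (g x - 1).factorial) * (g b₁ - 1).factorial
      = ∏ x, (g x - 1).factorial := Finset.prod_erase_mul _ _ (mem_univ b₁)
  have w1 : ∏ x ∈ ((univ : Finset (Fin n)).erase a₁).erase a₂, (g x - 1).factorial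
      = ∏ x ∈ ((univ : Finset (Fin n)).erase a₁).erase a₂, (d x - 1).factorial := by
    refine Finset.prod_congr rfl (fun x hx => ?_)
    have hx2 := Finset.mem_erase.mp hx
    have hx1 := Finset.mem_erase.mp hx2.2
    rw [hg]
    simp [hx1.1, hx2.1]
  have w2 : (∏ x ∈ ((univ : Finset (Fin n)).erase a₁).erase a₂, (g x - 1).factorial)
        * (g a₂ - 1).factorial
      = ∏ x ∈ (univ : Finset (Fin n)).erase a₁, (g x - 1).factorial :=
    Finset.prod_erase_mul _ _ ha₂mem
  have w3 : (∏ x ∈ (univ : Finset (Fin n)).erase a₁, (g x - 1).factorial) * (g a₁ - 1).factorial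
      = ∏ x, (g x - 1).factorial := Finset.prod_erase_mul _ _ (mem_univ a₁)
  have hP : ∏ w : {w : {x : Fin n // x ≠ b₁} // w ≠ vb₂}, (d₂ w - 1).factorial
      = (d a₁ - 2).factorial * (d a₂ - 2).factorial *
          ∏ k ∈ ((univ : Finset (Fin n)).erase a₁).erase a₂, (d k - 1).factorial := by
    rw [← q1]
    have e1 : ∏ w ∈ (univ : Finset {x : Fin n // x ≠ b₁}).erase vb₂, (g w.1 - 1).factorial
        = ∏ w : {x : Fin n // x ≠ b₁}, (g w.1 - 1).factorial := by
      rw [← q2, hgb₂1]; norm_num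
    rw [e1, ← q3]
    have e2 : ∏ x ∈ (univ : Finset (Fin n)).erase b₁, (g x - 1).factorial
        = ∏ x, (g x - 1).factorial := by
      rw [← q4, gb₁]; norm_num
    rw [e2, ← w3, ← w2, w1, ga₁, ga₂,
      show d a₁ - 1 - 1 = d a₁ - 2 from by omega,
      show d a₂ - 1 - 1 = d a₂ - 2 from by omega]
    ring
  -- injection
  set S₂ := {G'' : SimpleGraph {w : {x : Fin n // x ≠ b₁} // w ≠ vb₂} |
      G''.IsTree ∧ ∀ w, {y | G''.Adj w y}.ncard = d₂ w} with hS₂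
  set Tgt := {G : SimpleGraph (Fin n) | G.IsTree ∧ (∀ w, {y | G.Adj w y}.ncard = d w) ∧
      G.Adj a₁ b₁ ∧ G.Adj a₂ b₂} with hTgt
  set Φ : SimpleGraph {w : {x : Fin n // x ≠ b₁} // w ≠ vb₂} → SimpleGraph (Fin n) :=
    fun G'' => extLeaf b₁ a₁ (extLeaf vb₂ va₂ G'') with hΦ
  have hmap : ∀ G'' ∈ S₂, Φ G'' ∈ Tgt := by
    intro G'' hG''
    have htree₁ : (extLeaf vb₂ va₂ G'').IsTree :=
      ⟨extLeaf_connected hva₂vb₂ hG''.1.isConnected, extLeaf_isAcyclic hva₂vb₂ hG''.1.IsAcyclic⟩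
    have htree : (Φ G'').IsTree :=
      ⟨extLeaf_connected ha1b1 htree₁.isConnected, extLeaf_isAcyclic ha1b1 htree₁.IsAcyclic⟩
    refine ⟨htree, ?_, ?_, ?_⟩
    · intro w
      by_cases hw : w = b₁
      · subst hw
        rw [hΦ]
        rw [extLeaf_nbhd_v ha1b1, Set.ncard_singleton, hdb₁]
      · rw [hΦ, extLeaf_nbhd ha1b1 hw]
        by_cases hw2 : (⟨w, hw⟩ : {x : Fin n // x ≠ b₁}) = vb₂
        · have hwb₂ : w = b₂ := by simpa [hvb₂, Subtype.ext_iff] using hw2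
          rw [hw2, extLeaf_nbhd_v hva₂vb₂, Set.ncard_singleton,
            if_neg (hwb₂ ▸ Ne.symm ha1b2), hwb₂, hdb₂]
        · rw [extLeaf_nbhd hva₂vb₂ hw2,
            show {y | G''.Adj ⟨⟨w, hw⟩, hw2⟩ y}.ncard = d₂ ⟨⟨w, hw⟩, hw2⟩ from hG''.2 _,
            show d₂ ⟨⟨w, hw⟩, hw2⟩ = g w from rfl]
          have hva : ((⟨w, hw⟩ : {x : Fin n // x ≠ b₁}) = va₂) ↔ w = a₂ := by
            simp [hva₂, Subtype.ext_iff]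
          simp only [hg]
          by_cases hwa₁ : w = a₁
          · rw [if_pos hwa₁, if_pos hwa₁, if_neg (by rw [hva]; exact hwa₁ ▸ ha),
              hwa₁]
            omega
          · rw [if_neg hwa₁, if_neg hwa₁]
            by_cases hwa₂ : w = a₂
            · rw [if_pos hwa₂, if_pos (hva.mpr hwa₂), hwa₂]
              omega
            · rw [if_neg hwa₂, if_neg (fun h => hwa₂ (hva.mp h))]
              omega
    · have h1 : (Φ G'').Adj b₁ a₁ := (extLeaf_adj_v ha1b1 a₁).mpr rfl
      exact h1.symm
    · have h2 : (extLeaf vb₂ va₂ G'').Adj va₂ vb₂ :=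
        ((extLeaf_adj_v (G' := G'') hva₂vb₂ va₂).mpr rfl).symm
      exact (extLeaf_adj_lift va₂ vb₂).mpr h2
  have hinj : Function.Injective Φ :=
    (extLeaf_injective ha1b1).comp (extLeaf_injective hva₂vb₂)
  have hle : S₂.ncard ≤ Tgt.ncard := by
    calc S₂.ncard = (Φ '' S₂).ncard := (Set.ncard_image_of_injective _ hinj).symm
    _ ≤ Tgt.ncard := Set.ncard_le_ncard
          (by rintro G ⟨G'', hG'', rfl⟩; exact hmap G'' hG'') (Set.toFinite _)
  have hct := count_trees (n - 2) {w : {x : Fin n // x ≠ b₁} // w ≠ vb₂} d₂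
    hcard₂ hpos₂ hsum₂ (by omega)
  rw [show n - 2 - 2 = n - 4 from by omega, hP] at hct
  calc (n - 4).factorial ≤ S₂.ncard * ((d a₁ - 2).factorial * (d a₂ - 2).factorial *
          ∏ k ∈ ((univ : Finset (Fin n)).erase a₁).erase a₂, (d k - 1).factorial) := hct
    _ ≤ Tgt.ncard * ((d a₁ - 2).factorial * (d a₂ - 2).factorial *
          ∏ k ∈ ((univ : Finset (Fin n)).erase a₁).erase a₂, (d k - 1).factorial) :=
        Nat.mul_le_mul_right _ hle


end Count

open SimpleGraph Finset in
theorem count_pairs_with_two_common_edges (n : ℕ) (D F : Fin n → ℕ)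
    (hD : isTreeSeq D) (hF : isTreeSeq F) (hmin : ∀ i, min (D i) (F i) = 1)
    (hDs : ∀ i, D i ≠ n - 1) (hFs : ∀ i, F i ≠ n - 1)
    (i₁ i₂ j₁ j₂ : Fin n) (hi : i₁ ≠ i₂) (hj : j₁ ≠ j₂)
    (hDi₁ : 1 < D i₁) (hDi₂ : 1 < D i₂) (hFj₁ : 1 < F j₁) (hFj₂ : 1 < F j₂) :
    Nat.factorial (n - 4) * Nat.factorial (n - 4) ≤
      {P : SimpleGraph (Fin n) × SimpleGraph (Fin n) |
          P.1.IsTree ∧ realizes P.1 D ∧ P.2.IsTree ∧ realizes P.2 F ∧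
          P.1.Adj i₁ j₁ ∧ P.1.Adj i₂ j₂ ∧ P.2.Adj i₁ j₁ ∧ P.2.Adj i₂ j₂}.ncard *
        ((Nat.factorial (D i₁ - 2) * Nat.factorial (D i₂ - 2) *
            ∏ k ∈ (Finset.univ.erase i₁).erase i₂, Nat.factorial (D k - 1)) *
         (Nat.factorial (F j₁ - 2) * Nat.factorial (F j₂ - 2) *
            ∏ k ∈ (Finset.univ.erase j₁).erase j₂, Nat.factorial (F k - 1))) := by
  classical
  have hDj₁ : D j₁ = 1 := by have := hmin j₁; omega
  have hDj₂ : D j₂ = 1 := by have := hmin j₂; omega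
  have hFi₁ : F i₁ = 1 := by have := hmin i₁; omega
  have hFi₂ : F i₂ = 1 := by have := hmin i₂; omega
  set A := {G : SimpleGraph (Fin n) | G.IsTree ∧ (∀ w, {y | G.Adj w y}.ncard = D w) ∧
      G.Adj i₁ j₁ ∧ G.Adj i₂ j₂} with hA
  set B := {G : SimpleGraph (Fin n) | G.IsTree ∧ (∀ w, {y | G.Adj w y}.ncard = F w) ∧
      G.Adj j₁ i₁ ∧ G.Adj j₂ i₂} with hB
  have hTA := two_ext D i₁ i₂ j₁ j₂ hi hj hD.1 hD.2 hDi₁ hDi₂ hDj₁ hDj₂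
  have hTB := two_ext F j₁ j₂ i₁ i₂ hj hi hF.1 hF.2 hFj₁ hFj₂ hFi₁ hFi₂
  -- identify the pair set with A ×ˢ B
  have hset : {P : SimpleGraph (Fin n) × SimpleGraph (Fin n) |
      P.1.IsTree ∧ realizes P.1 D ∧ P.2.IsTree ∧ realizes P.2 F ∧
      P.1.Adj i₁ j₁ ∧ P.1.Adj i₂ j₂ ∧ P.2.Adj i₁ j₁ ∧ P.2.Adj i₂ j₂} = A ×ˢ B := by
    ext P
    simp only [Set.mem_setOf_eq, Set.mem_prod, hA, hB]
    constructor
    · rintro ⟨h1, h2, h3, h4, h5, h6, h7, h8⟩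
      exact ⟨⟨h1, h2, h5, h6⟩, ⟨h3, h4, h7.symm, h8.symm⟩⟩
    · rintro ⟨⟨h1, h2, h5, h6⟩, ⟨h3, h4, h7, h8⟩⟩
      exact ⟨h1, h2, h3, h4, h5, h6, h7.symm, h8.symm⟩
  rw [hset]
  have hprod : (A ×ˢ B).ncard = A.ncard * B.ncard := by
    rw [← Nat.card_coe_set_eq, ← Nat.card_coe_set_eq, ← Nat.card_coe_set_eq]
    rw [← Nat.card_prod]
    exact Nat.card_congr (Equiv.Set.prod A B)
  rw [hprod]
  calc (n - 4).factorial * (n - 4).factorial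
      ≤ (A.ncard * ((D i₁ - 2).factorial * (D i₂ - 2).factorial *
            ∏ k ∈ (Finset.univ.erase i₁).erase i₂, (D k - 1).factorial)) *
        (B.ncard * ((F j₁ - 2).factorial * (F j₂ - 2).factorial *
            ∏ k ∈ (Finset.univ.erase j₁).erase j₂, (F k - 1).factorial)) :=
        Nat.mul_le_mul hTA hTB
    _ = A.ncard * B.ncard * (((D i₁ - 2).factorial * (D i₂ - 2).factorial *
            ∏ k ∈ (Finset.univ.erase i₁).erase i₂, (D k - 1).factorial) *
          ((F j₁ - 2).factorial * (F j₂ - 2).factorial *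
            ∏ k ∈ (Finset.univ.erase j₁).erase j₂, (F k - 1).factorial)) := by ring
end

section
/- Degree sequences D = (d_1,...,d_n) and F = (f_1,...,f_n) have edge-disjoint realizations if and only if D' = (d_1+1,...,d_n+1, n) and F' = (f_1,...,f_n, 0) have edge-disjoint realizations on n+1 vertices. -/
section helpers

lemma disjoint_edgeSet_iff' {V : Type*} (G H : SimpleGraph V) :
    Disjoint G.edgeSet H.edgeSet ↔ ∀ x y, G.Adj x y → ¬ H.Adj x y := by
  rw [Set.disjoint_left]
  constructor
  · intro h x y hG hH
    exact h (G.mem_edgeSet.2 hG) (H.mem_edgeSet.2 hH)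
  · intro h e heG heH
    induction e using Sym2.ind with
    | _ x y => exact h x y (G.mem_edgeSet.1 heG) (H.mem_edgeSet.1 heH)

lemma compl_last_eq (n : ℕ) :
    {u : Fin (n+1) | u ≠ Fin.last n} = Fin.castSucc '' Set.univ := by
  ext u
  simp only [Set.mem_setOf_eq, Set.image_univ, Set.mem_range]
  constructor
  · intro h; exact Fin.exists_castSucc_eq.mpr h
  · rintro ⟨i, rfl⟩; exact (Fin.castSucc_lt_last i).ne

lemma ncard_compl_last (n : ℕ) :
    {u : Fin (n+1) | u ≠ Fin.last n}.ncard = n := by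
  rw [compl_last_eq, Set.ncard_image_of_injective _ (Fin.castSucc_injective n),
    Set.ncard_univ, Nat.card_eq_fintype_card, Fintype.card_fin]

/-- Add a dominating vertex to `G`. -/
def liftG {n : ℕ} (G : SimpleGraph (Fin n)) : SimpleGraph (Fin (n+1)) where
  Adj a b := (∃ (ha : a ≠ Fin.last n) (hb : b ≠ Fin.last n),
      G.Adj (a.castPred ha) (b.castPred hb)) ∨
    (a = Fin.last n ∧ b ≠ Fin.last n) ∨ (b = Fin.last n ∧ a ≠ Fin.last n)
  symm := by
    constructor
    rintro a b (⟨ha, hb, h⟩ | ⟨ha, hb⟩ | ⟨hb, ha⟩)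
    · exact Or.inl ⟨hb, ha, h.symm⟩
    · exact Or.inr (Or.inr ⟨ha, hb⟩)
    · exact Or.inr (Or.inl ⟨hb, ha⟩)
  loopless := by
    constructor
    rintro a (⟨ha, hb, h⟩ | ⟨ha, hb⟩ | ⟨hb, ha⟩)
    · exact G.loopless.irrefl _ h
    · exact hb ha
    · exact ha hb

/-- Add an isolated vertex to `H`. -/
def liftH {n : ℕ} (H : SimpleGraph (Fin n)) : SimpleGraph (Fin (n+1)) where
  Adj a b := ∃ (ha : a ≠ Fin.last n) (hb : b ≠ Fin.last n),
      H.Adj (a.castPred ha) (b.castPred hb)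
  symm := by constructor; rintro a b ⟨ha, hb, h⟩; exact ⟨hb, ha, h.symm⟩
  loopless := by constructor; rintro a ⟨ha, hb, h⟩; exact H.loopless.irrefl _ h

lemma castSucc_ne_last {n : ℕ} (i : Fin n) : i.castSucc ≠ Fin.last n :=
  (Fin.castSucc_lt_last i).ne

lemma liftG_nbr {n : ℕ} (G : SimpleGraph (Fin n)) (i : Fin n) :
    {u | (liftG G).Adj i.castSucc u} =
      insert (Fin.last n) (Fin.castSucc '' {u | G.Adj i u}) := by
  ext u
  simp only [Set.mem_setOf_eq, Set.mem_insert_iff, Set.mem_image, liftG]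
  constructor
  · rintro (⟨ha, hb, h⟩ | ⟨ha, hb⟩ | ⟨hb, ha⟩)
    · refine Or.inr ⟨u.castPred hb, ?_, by simp⟩
      simpa using h
    · exact absurd ha (castSucc_ne_last i)
    · exact Or.inl hb
  · rintro (rfl | ⟨j, hj, rfl⟩)
    · exact Or.inr (Or.inr ⟨rfl, castSucc_ne_last i⟩)
    · exact Or.inl ⟨castSucc_ne_last i, castSucc_ne_last j, by simpa using hj⟩

lemma liftG_nbr_last {n : ℕ} (G : SimpleGraph (Fin n)) :
    {u | (liftG G).Adj (Fin.last n) u} = {u | u ≠ Fin.last n} := by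
  ext u
  constructor
  · rintro (⟨ha, _, _⟩ | ⟨_, hb⟩ | ⟨_, ha⟩)
    · exact absurd rfl ha
    · exact hb
    · exact absurd rfl ha
  · intro h; exact Or.inr (Or.inl ⟨rfl, h⟩)

lemma liftH_nbr {n : ℕ} (H : SimpleGraph (Fin n)) (i : Fin n) :
    {u | (liftH H).Adj i.castSucc u} = Fin.castSucc '' {u | H.Adj i u} := by
  ext u
  simp only [Set.mem_setOf_eq, Set.mem_image, liftH]
  constructor
  · rintro ⟨ha, hb, h⟩
    exact ⟨u.castPred hb, by simpa using h, by simp⟩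
  · rintro ⟨j, hj, rfl⟩
    exact ⟨castSucc_ne_last i, castSucc_ne_last j, by simpa using hj⟩

lemma liftH_nbr_last {n : ℕ} (H : SimpleGraph (Fin n)) :
    {u | (liftH H).Adj (Fin.last n) u} = ∅ := by
  ext u
  simp only [Set.mem_setOf_eq, Set.mem_empty_iff_false, iff_false, liftH]
  rintro ⟨ha, _, _⟩; exact ha rfl

end helpers

theorem packing_add_dominating_vertex (n : ℕ) (D F : Fin n → ℕ) :
    (∃ G H : SimpleGraph (Fin n),
        realizes G D ∧ realizes H F ∧ Disjoint G.edgeSet H.edgeSet) ↔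
    (∃ G' H' : SimpleGraph (Fin (n + 1)),
        realizes G' (Fin.snoc (fun i => D i + 1) n) ∧
        realizes H' (Fin.snoc F 0) ∧
        Disjoint G'.edgeSet H'.edgeSet) := by
  constructor
  · rintro ⟨G, H, hG, hH, hdisj⟩
    refine ⟨liftG G, liftH H, ?_, ?_, ?_⟩
    · intro v
      induction v using Fin.lastCases with
      | last => rw [liftG_nbr_last, ncard_compl_last, Fin.snoc_last]
      | cast i =>
        rw [liftG_nbr, Set.ncard_insert_of_notMem (by
            rintro ⟨j, _, hj⟩; exact castSucc_ne_last j hj),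
          Set.ncard_image_of_injective _ (Fin.castSucc_injective n), hG i,
          Fin.snoc_castSucc]
    · intro v
      induction v using Fin.lastCases with
      | last => rw [liftH_nbr_last, Set.ncard_empty, Fin.snoc_last]
      | cast i =>
        rw [liftH_nbr, Set.ncard_image_of_injective _ (Fin.castSucc_injective n),
          hH i, Fin.snoc_castSucc]
    · rw [disjoint_edgeSet_iff'] at hdisj ⊢
      rintro x y hxy ⟨hx, hy, hH'⟩
      rcases hxy with ⟨hx', hy', hG'⟩ | ⟨rfl, _⟩ | ⟨rfl, _⟩
      · exact hdisj _ _ hG' hH'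
      · exact hx rfl
      · exact hy rfl
  · rintro ⟨G', H', hG', hH', hdisj⟩
    have hdom : ∀ u, u ≠ Fin.last n → G'.Adj (Fin.last n) u := by
      have hsub : {u | G'.Adj (Fin.last n) u} ⊆ {u | u ≠ Fin.last n} :=
        fun u hu => (G'.ne_of_adj hu).symm
      have heq : {u | G'.Adj (Fin.last n) u} = {u | u ≠ Fin.last n} := by
        apply Set.eq_of_subset_of_ncard_le hsub
        rw [ncard_compl_last]
        have := hG' (Fin.last n)
        rw [Fin.snoc_last] at this
        omega
      intro u hu
      have : u ∈ {u | G'.Adj (Fin.last n) u} := heq ▸ hu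
      exact this
    have hiso : ∀ u, ¬ H'.Adj (Fin.last n) u := by
      have := hH' (Fin.last n)
      rw [Fin.snoc_last] at this
      have hempty : {u | H'.Adj (Fin.last n) u} = ∅ :=
        (Set.ncard_eq_zero (Set.toFinite _)).1 this
      intro u hu
      exact absurd (show u ∈ {u | H'.Adj (Fin.last n) u} from hu) (by rw [hempty]; simp)
    refine ⟨G'.comap Fin.castSucc, H'.comap Fin.castSucc, ?_, ?_, ?_⟩
    · intro i
      have hset : {u | G'.Adj i.castSucc u} =
          insert (Fin.last n) (Fin.castSucc '' {u | (G'.comap Fin.castSucc).Adj i u}) := by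
        ext u
        simp only [Set.mem_setOf_eq, Set.mem_insert_iff, Set.mem_image,
          SimpleGraph.comap_adj]
        constructor
        · intro h
          by_cases hu : u = Fin.last n
          · exact Or.inl hu
          · obtain ⟨j, rfl⟩ := Fin.exists_castSucc_eq.mpr hu
            exact Or.inr ⟨j, h, rfl⟩
        · rintro (rfl | ⟨j, hj, rfl⟩)
          · exact (hdom _ (castSucc_ne_last i)).symm
          · exact hj
      have := hG' i.castSucc
      rw [Fin.snoc_castSucc, hset, Set.ncard_insert_of_notMem (by
          rintro ⟨j, _, hj⟩; exact castSucc_ne_last j hj),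
        Set.ncard_image_of_injective _ (Fin.castSucc_injective n)] at this
      omega
    · intro i
      have hset : {u | H'.Adj i.castSucc u} =
          Fin.castSucc '' {u | (H'.comap Fin.castSucc).Adj i u} := by
        ext u
        simp only [Set.mem_setOf_eq, Set.mem_image, SimpleGraph.comap_adj]
        constructor
        · intro h
          have hu : u ≠ Fin.last n := by
            rintro rfl
            exact hiso _ h.symm
          obtain ⟨j, rfl⟩ := Fin.exists_castSucc_eq.mpr hu
          exact ⟨j, h, rfl⟩
        · rintro ⟨j, hj, rfl⟩
          exact hj
      have := hH' i.castSucc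
      rw [Fin.snoc_castSucc, hset,
        Set.ncard_image_of_injective _ (Fin.castSucc_injective n)] at this
      exact this
    · rw [disjoint_edgeSet_iff'] at hdisj ⊢
      intro x y hGxy hHxy
      exact hdisj _ _ hGxy hHxy
end

section
/- Degree sequences D = (d_1,...,d_n) and F = (f_1,...,f_n) have edge-disjoint realizations if and only if D' = (d_1,...,d_n, 1, 1) and F' = (f_1+1,...,f_n+1, n, 0) have edge-disjoint realizations on n+2 vertices. -/
namespace PackAux

variable {n : ℕ}

def e : Fin n → Fin (n + 2) := fun i => i.castSucc.castSucc
def a : Fin (n + 2) := Fin.castSucc (Fin.last n)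
def b : Fin (n + 2) := Fin.last (n + 1)

lemma e_inj : Function.Injective (e (n := n)) := fun i j h => by
  simpa [e, Fin.ext_iff] using h

lemma e_ne_a (i : Fin n) : e i ≠ a := by
  simp only [e, a, ne_eq, Fin.ext_iff, Fin.coe_castSucc, Fin.val_last]
  omega

lemma e_ne_b (i : Fin n) : e i ≠ b := by
  simp only [e, b, ne_eq, Fin.ext_iff, Fin.coe_castSucc, Fin.val_last]
  omega

lemma a_ne_b : (a : Fin (n+2)) ≠ b := by
  simp [a, b, Fin.ext_iff]

lemma mem_range_e {u : Fin (n+2)} (hu1 : u ≠ a) (hu2 : u ≠ b) :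
    u ∈ Set.range (e (n := n)) := by
  have h1 : u.val ≠ n := fun h => hu1 (by simp [a, Fin.ext_iff, h])
  have h2 : u.val ≠ n + 1 := fun h => hu2 (by simp [b, Fin.ext_iff, h])
  have hlt : u.val < n := by omega
  exact ⟨⟨u.val, hlt⟩, by simp [e, Fin.ext_iff]⟩

lemma graph_disjoint_iff {V : Type*} {G H : SimpleGraph V} :
    Disjoint G H ↔ ∀ x y, G.Adj x y → ¬ H.Adj x y := by
  rw [disjoint_iff]
  constructor
  · intro h x y hg hh
    have h2 : (G ⊓ H).Adj x y := ⟨hg, hh⟩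
    rw [h] at h2
    exact h2
  · intro h
    ext x y
    simp only [SimpleGraph.inf_adj, SimpleGraph.bot_adj, iff_false, not_and]
    exact h x y

lemma realizes_iff {G : SimpleGraph (Fin n)} {d : Fin n → ℕ} :
    realizes G d ↔ ∀ v, (G.neighborSet v).ncard = d v := Iff.rfl

lemma ncard_range_e : (Set.range (e (n := n))).ncard = n := by
  rw [← Set.image_univ, Set.ncard_image_of_injective _ e_inj, Set.ncard_univ]
  simp

/-- the star graph from `a` to all `e i` -/
def star' : SimpleGraph (Fin (n + 2)) where
  Adj x y := (x = a ∧ ∃ i, y = e i) ∨ (y = a ∧ ∃ i, x = e i)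
  symm := ⟨by intro x y h; tauto⟩
  loopless := ⟨by
    rintro x (⟨rfl, i, hi⟩ | ⟨rfl, i, hi⟩) <;> exact e_ne_a i hi.symm⟩

/-- the single edge between `a` and `b` -/
def edge' : SimpleGraph (Fin (n + 2)) where
  Adj x y := (x = a ∧ y = b) ∨ (x = b ∧ y = a)
  symm := ⟨by intro x y h; tauto⟩
  loopless := ⟨by rintro x (⟨rfl, h⟩ | ⟨rfl, h⟩) <;> exact a_ne_b (by tauto)⟩

end PackAux

open PackAux

theorem packing_add_two_vertices (n : ℕ) (D F : Fin n → ℕ) :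
    (∃ G H : SimpleGraph (Fin n),
        realizes G D ∧ realizes H F ∧ Disjoint G.edgeSet H.edgeSet) ↔
    (∃ G' H' : SimpleGraph (Fin (n + 2)),
        realizes G' (Fin.snoc (Fin.snoc D 1) 1) ∧
        realizes H' (Fin.snoc (Fin.snoc (fun i => F i + 1) n) 0) ∧
        Disjoint G'.edgeSet H'.edgeSet) := by
  simp only [SimpleGraph.disjoint_edgeSet]
  constructor
  · rintro ⟨G, H, hG, hH, hdisj⟩
    rw [graph_disjoint_iff] at hdisj
    rw [realizes_iff] at hG hH
    refine ⟨G.map e ⊔ edge', H.map e ⊔ star', ?_, ?_, ?_⟩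
    · rw [realizes_iff]
      intro v
      induction v using Fin.lastCases with
      | last =>
        rw [Fin.snoc_last]
        have hset : (G.map e ⊔ edge').neighborSet b = {a} := by
          ext u
          constructor
          · rintro (⟨-, x, y, hxy, hx, hy⟩ | ⟨h1, h2⟩ | ⟨h1, h2⟩)
            · exact absurd hx (e_ne_b x)
            · exact absurd h1 a_ne_b.symm
            · exact h2
          · rintro rfl
            exact Or.inr (Or.inr ⟨rfl, rfl⟩)
        rw [show (Fin.last (n+1) : Fin (n+2)) = b from rfl, hset, Set.ncard_singleton]
      | cast w =>
        rw [Fin.snoc_castSucc]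
        induction w using Fin.lastCases with
        | last =>
          rw [Fin.snoc_last]
          have hset : (G.map e ⊔ edge').neighborSet a = {b} := by
            ext u
            constructor
            · rintro (⟨-, x, y, hxy, hx, hy⟩ | ⟨h1, h2⟩ | ⟨h1, h2⟩)
              · exact absurd hx (e_ne_a x)
              · exact h2
              · exact absurd h1 a_ne_b
            · rintro rfl
              exact Or.inr (Or.inl ⟨rfl, rfl⟩)
          rw [show (Fin.castSucc (Fin.last n) : Fin (n+2)) = a from rfl, hset,
            Set.ncard_singleton]
        | cast i =>
          rw [Fin.snoc_castSucc]
          have hset : (G.map e ⊔ edge').neighborSet (e i)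
              = e '' G.neighborSet i := by
            ext u
            constructor
            · rintro (⟨-, x, y, hxy, hx, hy⟩ | ⟨h1, h2⟩ | ⟨h1, h2⟩)
              · obtain rfl := e_inj hx
                exact ⟨y, hxy, hy⟩
              · exact absurd h1 (e_ne_a i)
              · exact absurd h1 (e_ne_b i)
            · rintro ⟨y, hy, rfl⟩
              exact Or.inl ⟨fun h => (hy.ne (e_inj h)), i, y, hy, rfl, rfl⟩
          rw [show (Fin.castSucc (Fin.castSucc i) : Fin (n+2)) = e i from rfl, hset,
            Set.ncard_image_of_injective _ e_inj]
          exact hG i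
    · rw [realizes_iff]
      intro v
      induction v using Fin.lastCases with
      | last =>
        rw [Fin.snoc_last]
        have hset : (H.map e ⊔ star').neighborSet b = ∅ := by
          ext u
          simp only [Set.mem_empty_iff_false, iff_false]
          rintro (⟨-, x, y, hxy, hx, hy⟩ | ⟨h1, h2⟩ | ⟨h1, i, h2⟩)
          · exact e_ne_b x hx
          · exact a_ne_b h1.symm
          · exact e_ne_b i h2.symm
        rw [show (Fin.last (n+1) : Fin (n+2)) = b from rfl, hset, Set.ncard_empty]
      | cast w =>
        rw [Fin.snoc_castSucc]
        induction w using Fin.lastCases with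
        | last =>
          rw [Fin.snoc_last]
          have hset : (H.map e ⊔ star').neighborSet a = Set.range e := by
            ext u
            constructor
            · rintro (⟨-, x, y, hxy, hx, hy⟩ | ⟨h1, i, h2⟩ | ⟨h1, i, h2⟩)
              · exact absurd hx (e_ne_a x)
              · exact ⟨i, h2.symm⟩
              · exact absurd h2.symm (e_ne_a i)
            · rintro ⟨i, rfl⟩
              exact Or.inr (Or.inl ⟨rfl, i, rfl⟩)
          rw [show (Fin.castSucc (Fin.last n) : Fin (n+2)) = a from rfl, hset,
            ncard_range_e]
        | cast i =>
          rw [Fin.snoc_castSucc]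
          have hset : (H.map e ⊔ star').neighborSet (e i)
              = insert a (e '' H.neighborSet i) := by
            ext u
            constructor
            · rintro (⟨-, x, y, hxy, hx, hy⟩ | ⟨h1, j, h2⟩ | ⟨h1, j, h2⟩)
              · obtain rfl := e_inj hx
                exact Or.inr ⟨y, hxy, hy⟩
              · exact absurd h1 (e_ne_a i)
              · exact Or.inl h1
            · rintro (rfl | ⟨y, hy, rfl⟩)
              · exact Or.inr (Or.inr ⟨rfl, i, rfl⟩)
              · exact Or.inl ⟨fun h => (hy.ne (e_inj h)), i, y, hy, rfl, rfl⟩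
          have hna : a ∉ e '' H.neighborSet i := by
            rintro ⟨y, hy1, hy⟩
            exact e_ne_a y hy
          rw [show (Fin.castSucc (Fin.castSucc i) : Fin (n+2)) = e i from rfl, hset,
            Set.ncard_insert_of_notMem hna (Set.toFinite _),
            Set.ncard_image_of_injective _ e_inj, hH i]
    · rw [graph_disjoint_iff]
      rintro x y (⟨-, u, w, huw, rfl, rfl⟩ | ⟨rfl, rfl⟩ | ⟨rfl, rfl⟩)
      · rintro (⟨-, u', w', huw', hu', hw'⟩ | ⟨h1, j, h2⟩ | ⟨h1, j, h2⟩)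
        · obtain rfl := e_inj hu'
          obtain rfl := e_inj hw'
          exact hdisj _ _ huw huw'
        · exact e_ne_a u h1
        · exact e_ne_a w h1
      · rintro (⟨-, u', w', huw', hu', hw'⟩ | ⟨h1, j, h2⟩ | ⟨h1, j, h2⟩)
        · exact e_ne_a u' hu'
        · exact e_ne_b j h2.symm
        · exact a_ne_b h1.symm
      · rintro (⟨-, u', w', huw', hu', hw'⟩ | ⟨h1, j, h2⟩ | ⟨h1, j, h2⟩)
        · exact e_ne_b u' hu'
        · exact a_ne_b h1.symm
        · exact e_ne_b j h2.symm
  · rintro ⟨G', H', hG', hH', hdisj⟩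
    rw [graph_disjoint_iff] at hdisj
    rw [realizes_iff] at hG' hH'
    -- degrees at the special vertices
    have hGb : (G'.neighborSet b).ncard = 1 := by
      have := hG' b
      rwa [show (b : Fin (n+2)) = Fin.last (n+1) from rfl, Fin.snoc_last] at this
    have hGa : (G'.neighborSet a).ncard = 1 := by
      have := hG' a
      rwa [show (a : Fin (n+2)) = Fin.castSucc (Fin.last n) from rfl,
        Fin.snoc_castSucc, Fin.snoc_last] at this
    have hHb : (H'.neighborSet b).ncard = 0 := by
      have := hH' b
      rwa [show (b : Fin (n+2)) = Fin.last (n+1) from rfl, Fin.snoc_last] at this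
    have hHa : (H'.neighborSet a).ncard = n := by
      have := hH' a
      rwa [show (a : Fin (n+2)) = Fin.castSucc (Fin.last n) from rfl,
        Fin.snoc_castSucc, Fin.snoc_last] at this
    have hGei : ∀ i : Fin n, (G'.neighborSet (e i)).ncard = D i := by
      intro i
      have := hG' (e i)
      rwa [show (e i : Fin (n+2)) = Fin.castSucc (Fin.castSucc i) from rfl,
        Fin.snoc_castSucc, Fin.snoc_castSucc] at this
    have hHei : ∀ i : Fin n, (H'.neighborSet (e i)).ncard = F i + 1 := by
      intro i
      have := hH' (e i)
      rwa [show (e i : Fin (n+2)) = Fin.castSucc (Fin.castSucc i) from rfl,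
        Fin.snoc_castSucc, Fin.snoc_castSucc] at this
    -- b is H'-isolated
    have hHbempty : H'.neighborSet b = ∅ := by
      rw [Set.ncard_eq_zero (Set.toFinite _)] at hHb
      exact hHb
    have hHbadj : ∀ u, ¬ H'.Adj b u := by
      intro u hu
      have : u ∈ H'.neighborSet b := hu
      rw [hHbempty] at this
      exact this
    -- a is H'-adjacent to all of range e
    have hHaset : H'.neighborSet a = Set.range e := by
      have hsub : H'.neighborSet a ⊆ Set.range e := by
        intro u hu
        refine mem_range_e (fun h => ?_) (fun h => ?_)
        · exact H'.irrefl (h ▸ hu)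
        · exact hHbadj a ((h ▸ hu : H'.Adj a b).symm)
      refine Set.eq_of_subset_of_ncard_le hsub ?_ (Set.toFinite _)
      exact le_of_eq (by rw [ncard_range_e, hHa])
    have hHaAdj : ∀ i : Fin n, H'.Adj a (e i) := by
      intro i
      have : e i ∈ H'.neighborSet a := by rw [hHaset]; exact ⟨i, rfl⟩
      exact this
    -- a's unique G'-neighbor is b
    have hGaset : G'.neighborSet a = {b} := by
      have hsub : G'.neighborSet a ⊆ {b} := by
        intro u hu
        by_contra hub
        have hua : u ≠ a := fun h => G'.irrefl (h ▸ hu)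
        obtain ⟨i, rfl⟩ := mem_range_e hua hub
        exact hdisj _ _ hu (hHaAdj i)
      have h1 : ({b} : Set (Fin (n+2))).ncard ≤ (G'.neighborSet a).ncard := by
        rw [Set.ncard_singleton, hGa]
      exact Set.eq_of_subset_of_ncard_le hsub h1 (Set.toFinite _)
    have hGab : G'.Adj a b := by
      have : b ∈ G'.neighborSet a := by rw [hGaset]; rfl
      exact this
    -- b's unique G'-neighbor is a
    have hGbset : G'.neighborSet b = {a} := by
      have hsub : ({a} : Set (Fin (n+2))) ⊆ G'.neighborSet b := by
        rintro u rfl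
        exact hGab.symm
      have h1 : (G'.neighborSet b).ncard ≤ ({a} : Set (Fin (n+2))).ncard := by
        rw [Set.ncard_singleton, hGb]
      exact (Set.eq_of_subset_of_ncard_le hsub h1 (Set.toFinite _)).symm
    have hGnota : ∀ i : Fin n, ¬ G'.Adj (e i) a := by
      intro i hi
      have : e i ∈ G'.neighborSet a := hi.symm
      rw [hGaset] at this
      exact e_ne_b i this
    have hGnotb : ∀ i : Fin n, ¬ G'.Adj (e i) b := by
      intro i hi
      have : e i ∈ G'.neighborSet b := hi.symm
      rw [hGbset] at this
      exact e_ne_a i this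
    refine ⟨G'.comap e, H'.comap e, ?_, ?_, ?_⟩
    · rw [realizes_iff]
      intro i
      have hsub : G'.neighborSet (e i) ⊆ Set.range e := by
        intro u hu
        refine mem_range_e (fun h => ?_) (fun h => ?_)
        · exact hGnota i (h ▸ hu)
        · exact hGnotb i (h ▸ hu)
      have hpre : (G'.comap e).neighborSet i = e ⁻¹' (G'.neighborSet (e i)) := rfl
      rw [hpre, ← Set.ncard_image_of_injective _ (e_inj (n := n)),
        Set.image_preimage_eq_of_subset hsub, hGei i]
    · rw [realizes_iff]
      intro i
      have hsub : G'.neighborSet (e i) ⊆ Set.range e := by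
        intro u hu
        refine mem_range_e (fun h => ?_) (fun h => ?_)
        · exact hGnota i (h ▸ hu)
        · exact hGnotb i (h ▸ hu)
      have hsub2 : H'.neighborSet (e i) \ {a} ⊆ Set.range e := by
        rintro u ⟨hu, hua⟩
        refine mem_range_e hua (fun h => ?_)
        exact hHbadj (e i) ((h ▸ hu : H'.Adj (e i) b).symm)
      have hpre : (H'.comap e).neighborSet i = e ⁻¹' (H'.neighborSet (e i) \ {a}) := by
        ext j
        simp only [SimpleGraph.mem_neighborSet, SimpleGraph.comap_adj, Set.mem_preimage,
          Set.mem_diff, Set.mem_singleton_iff]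
        exact ⟨fun h => ⟨h, e_ne_a j⟩, fun h => h.1⟩
      have hmem : a ∈ H'.neighborSet (e i) := (hHaAdj i).symm
      rw [hpre, ← Set.ncard_image_of_injective _ (e_inj (n := n)),
        Set.image_preimage_eq_of_subset hsub2,
        Set.ncard_diff_singleton_of_mem hmem, hHei i]
      omega
    · rw [graph_disjoint_iff]
      intro x y hx hy
      exact hdisj _ _ hx hy
end
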